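/- arXiv:1309.1987 — 5 statements merged into one kernel-verified Lean document; each statement's English description precedes it below -/
import Mathlib

section
/- For every positive integer N there exist a positive integer r with r ≤ 1 + log_φ N (where φ = (1+√5)/2) and coefficients b_1 ∈ {1,2,3}, b_i ∈ {1,2} for 2 ≤ i ≤ r, such that N = Σ_{i=1}^r b_i F_i, where F_i is the i-th Fibonacci number with F_0 = F_1 = 1. -/
/-- Fibonacci numbers with `F 0 = F 1 = 1`. -/
def F (i : ℕ) : ℕ := Nat.fib (i + 1)

noncomputable def phi : ℝ := (1 + Real.sqrt 5) / 2

lemma F_rec (n : ℕ) : F (n + 2) = F (n + 1) + F n := by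
  show Nat.fib (n + 3) = Nat.fib (n + 2) + Nat.fib (n + 1)
  rw [show n + 3 = (n + 1) + 2 from rfl, Nat.fib_add_two, Nat.add_comm]

lemma phi_eq : phi = Real.goldenRatio := rfl

lemma one_lt_phi : 1 < phi := phi_eq ▸ Real.one_lt_goldenRatio

lemma phi_sq : phi ^ 2 = phi + 1 := phi_eq ▸ Real.goldenRatio_sq

/-- Lemma B: sum of F over [1,r]. -/
lemma sumF (r : ℕ) : (∑ i ∈ Finset.Icc 1 r, F i) + 2 = F (r + 2) := by
  induction r with
  | zero => decide
  | succ n ih =>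
    rw [Finset.sum_Icc_succ_top (by omega)]
    rw [F_rec (n + 1), ← ih]
    omega

/-- Lemma A: every D ≤ F(r+2) - 1 is a subset-like sum. -/
lemma repA : ∀ r, 1 ≤ r → ∀ D, D + 1 ≤ F (r + 2) →
    ∃ c : ℕ → ℕ, c 1 ≤ 2 ∧ (∀ i, 2 ≤ i → i ≤ r → c i ≤ 1) ∧
      D = ∑ i ∈ Finset.Icc 1 r, c i * F i := by
  intro r
  induction r with
  | zero => omega
  | succ n ih =>
    intro _ D hD
    rcases Nat.eq_or_lt_of_le (by omega : 1 ≤ n + 1) with h1 | h1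
    · -- n = 0, r = 1
      have hn : n = 0 := by omega
      subst hn
      have h3 : F 3 = 3 := by decide
      have hD' : D ≤ 2 := by
        have : F (0 + 1 + 2) = 3 := h3
        omega
      refine ⟨fun i => if i = 1 then D else 0, ?_, ?_, ?_⟩
      · show (if (1:ℕ) = 1 then D else 0) ≤ 2
        rw [if_pos rfl]; omega
      · intro i h2 h3; omega
      · simp [F]
    · have hn : 1 ≤ n := by omega
      have hrec : F (n + 3) = F (n + 2) + F (n + 1) := F_rec (n + 1)
      have hmono : F (n + 1) ≤ F (n + 2) := by
        unfold F; exact Nat.fib_mono (by omega)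
      have hD' : D + 1 ≤ F (n + 3) := by
        have e : n + 1 + 2 = n + 3 := by omega
        rwa [e] at hD
      by_cases hc : F (n + 1) ≤ D
      · obtain ⟨c, hc1, hc2, hc3⟩ := ih hn (D - F (n + 1)) (by omega)
        refine ⟨Function.update c (n + 1) 1, ?_, ?_, ?_⟩
        · rwa [Function.update_of_ne (by omega : (1:ℕ) ≠ n + 1)]
        · intro i h2 h3
          by_cases hi : i = n + 1
          · subst hi; simp [Function.update_self]
          · rw [Function.update_of_ne hi]; exact hc2 i h2 (by omega)
        · rw [Finset.sum_Icc_succ_top (by omega), Function.update_self, one_mul]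
          rw [Finset.sum_congr rfl (fun i hi => by
            simp only [Finset.mem_Icc] at hi
            rw [Function.update_of_ne (by omega : i ≠ n + 1)]), ← hc3]
          omega
      · obtain ⟨c, hc1, hc2, hc3⟩ := ih hn D (by omega)
        refine ⟨Function.update c (n + 1) 0, ?_, ?_, ?_⟩
        · rwa [Function.update_of_ne (by omega : (1:ℕ) ≠ n + 1)]
        · intro i h2 h3
          by_cases hi : i = n + 1
          · subst hi; simp [Function.update_self]
          · rw [Function.update_of_ne hi]; exact hc2 i h2 (by omega)
        · rw [Finset.sum_Icc_succ_top (by omega), Function.update_self, zero_mul, add_zero]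
          rw [Finset.sum_congr rfl (fun i hi => by
            simp only [Finset.mem_Icc] at hi
            rw [Function.update_of_ne (by omega : i ≠ n + 1)]), ← hc3]
  
/-- Lemma C: phi ^ r ≤ F (r+3) - 2. -/
lemma lowC : ∀ r : ℕ, phi ^ r + 2 ≤ (F (r + 3) : ℝ) := by
  have key : ∀ r : ℕ, phi ^ r + 2 ≤ (F (r + 3) : ℝ) ∧ phi ^ (r+1) + 2 ≤ (F (r + 4) : ℝ) := by
    intro r
    induction r with
    | zero =>
      constructor
      · have : F 3 = 3 := by norm_num [F]
        rw [this]; norm_num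
      · have h5 : F 4 = 5 := by decide
        rw [h5, pow_one]
        simp only [phi]
        have hs : Real.sqrt 5 ^ 2 = 5 := Real.sq_sqrt (by norm_num)
        have hs0 : 0 ≤ Real.sqrt 5 := Real.sqrt_nonneg 5
        push_cast
        nlinarith
    | succ n ih =>
      obtain ⟨h1, h2⟩ := ih
      refine ⟨h2, ?_⟩
      have hrec : F (n + 5) = F (n + 4) + F (n + 3) := F_rec (n + 3)
      have hpow : phi ^ (n + 2) = phi ^ (n + 1) + phi ^ n := by
        have : phi ^ (n + 2) = phi ^ n * phi ^ 2 := by ring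
        rw [this, phi_sq]; ring
      rw [show n + 1 + 4 = n + 5 by ring, hrec]
      push_cast
      rw [show n + 1 + 1 = n + 2 by ring, hpow]
      linarith
  exact fun r => (key r).1

lemma F_ge (k : ℕ) : k ≤ F k := by
  have : ∀ k, k ≤ F k ∧ k + 1 ≤ F (k + 1) := by
    intro k
    induction k with
    | zero => exact ⟨Nat.zero_le _, by simp [F]⟩
    | succ n ih =>
      refine ⟨ih.2, ?_⟩
      have hpos : 0 < F n := by unfold F; exact Nat.fib_pos.mpr (by omega)
      show n + 2 ≤ F (n + 2)
      rw [F_rec n]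
      omega
  exact (this k).1

theorem stmt0 (N : ℕ) (hN : 0 < N) :
    ∃ (r : ℕ) (b : ℕ → ℕ), 0 < r ∧ (r : ℝ) ≤ 1 + Real.logb phi N ∧
      b 1 ∈ ({1, 2, 3} : Set ℕ) ∧
      (∀ i, 2 ≤ i → i ≤ r → b i ∈ ({1, 2} : Set ℕ)) ∧
      N = ∑ i ∈ Finset.Icc 1 r, b i * F i := by
  have hPex : ∃ k, N + 2 < F (k + 3) := ⟨N, by have := F_ge (N + 3); omega⟩
  classical
  set r := Nat.find hPex with hr
  have hlt : N + 2 < F (r + 3) := Nat.find_spec hPex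
  have hr1 : 1 ≤ r := by
    by_contra h
    have h0 : r = 0 := by omega
    rw [h0] at hlt
    simp only [Nat.zero_add] at hlt
    have h3 : F 3 = 3 := by decide
    omega
  have hle : F (r + 2) ≤ N + 2 := by
    have := Nat.find_min hPex (m := r - 1) (by omega)
    have heq : r - 1 + 3 = r + 2 := by omega
    rw [heq] at this
    omega
  have hmono : F (r + 1) ≤ F (r + 2) := by
    unfold F; exact Nat.fib_mono (by omega)
  have hrec : F (r + 3) = F (r + 2) + F (r + 1) := F_rec (r + 1)
  -- S = sum of F over [1,r]
  have hS := sumF r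
  set S := ∑ i ∈ Finset.Icc 1 r, F i with hSdef
  have hSN : S ≤ N := by omega
  obtain ⟨c, hc1, hc2, hc3⟩ := repA r hr1 (N - S) (by omega)
  refine ⟨r, fun i => 1 + c i, by omega, ?_, ?_, ?_, ?_⟩
  · -- bound
    have hC := lowC (r - 1)
    rw [show r - 1 + 3 = r + 2 by omega] at hC
    have hphiN : phi ^ (r - 1) ≤ (N : ℝ) := by
      have : (F (r + 2) : ℝ) ≤ (N : ℝ) + 2 := by exact_mod_cast hle
      linarith
    have hlogb : ((r : ℝ) - 1) ≤ Real.logb phi N := by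
      have h1 : Real.logb phi (phi ^ (r - 1)) ≤ Real.logb phi N := by
        apply Real.logb_le_logb_of_le one_lt_phi (pow_pos (by linarith [one_lt_phi]) _) hphiN
      rw [Real.logb_pow, Real.logb_self_eq_one one_lt_phi] at h1
      have : ((r - 1 : ℕ) : ℝ) = (r : ℝ) - 1 := by
        push_cast [Nat.cast_sub hr1]; ring
      rw [this, mul_one] at h1
      exact h1
    linarith
  · simp only [Set.mem_insert_iff, Set.mem_singleton_iff]
    omega
  · intro i h2 h3
    have := hc2 i h2 h3
    simp only [Set.mem_insert_iff, Set.mem_singleton_iff]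
    omega
  · have : ∑ i ∈ Finset.Icc 1 r, (1 + c i) * F i
        = S + ∑ i ∈ Finset.Icc 1 r, c i * F i := by
      rw [hSdef, ← Finset.sum_add_distrib]
      exact Finset.sum_congr rfl (fun i _ => by ring)
    rw [this, ← hc3]
    omega
end

section
/- Let (ξ_k)_{k≥1} be an arbitrary sequence in [0,1), and let (n_k)_{k≥1} be a sequence of positive reals satisfying inf_k n_{k+1}/(k·n_k) > 0. Then there exist a constant c > 0 and a real number α such that ‖α n_k − ξ_k‖ ≤ c/k for all k ≥ 1, where ‖x‖ denotes the distance from x to the nearest integer. -/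
/-- Distance from `x` to the nearest integer. -/
noncomputable def nd (x : ℝ) : ℝ := |x - round x|

lemma nd_le_abs_sub_int (x : ℝ) (m : ℤ) : nd x ≤ |x - m| := by
  by_cases h : (1:ℝ)/2 ≤ |x - m|
  · exact le_trans (abs_sub_round x) h
  · push_neg at h
    have h2 : |((round x - m : ℤ) : ℝ)| < 1 := by
      push_cast
      calc |((round x : ℝ) - m)| ≤ |(round x : ℝ) - x| + |x - m| := abs_sub_le _ _ _
        _ = |x - round x| + |x - m| := by rw [abs_sub_comm]
        _ < 1/2 + 1/2 := add_lt_add_of_le_of_lt (abs_sub_round x) h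
        _ = 1 := by norm_num
    have h3 : |(round x - m : ℤ)| < 1 := by exact_mod_cast h2
    have h4 : round x = m := by rw [abs_lt] at h3; omega
    simp [nd, h4]

/-- Left endpoints of the nested intervals. -/
noncomputable def leftEnd (ξ n : ℕ → ℝ) (c : ℝ) (K0 : ℕ) : ℕ → ℝ
  | 0 => ξ K0 / n K0
  | (j+1) => max (leftEnd ξ n c K0 j)
      (((⌈n (K0+j+1) * leftEnd ξ n c K0 j - ξ (K0+j+1)⌉ : ℤ) + ξ (K0+j+1)) / n (K0+j+1)
        - c / ((K0+j+1) * n (K0+j+1)))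

theorem stmt5 (ξ : ℕ → ℝ) (hξ : ∀ k, 1 ≤ k → ξ k ∈ Set.Ico (0 : ℝ) 1)
    (n : ℕ → ℝ) (hn : ∀ k, 1 ≤ k → 0 < n k)
    (hinf : ∃ κ > (0 : ℝ), ∀ k, 1 ≤ k → κ ≤ n (k + 1) / (k * n k)) :
    ∃ c > (0 : ℝ), ∃ α : ℝ, ∀ k, 1 ≤ k → nd (α * n k - ξ k) ≤ c / k := by
  obtain ⟨κ, hκ0, hκ⟩ := hinf
  set K0 : ℕ := ⌈1/κ⌉₊ + 1 with hK0def
  have hK0pos : 1 ≤ K0 := Nat.le_add_left 1 _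
  have hK0R : (1:ℝ)/κ ≤ K0 := by
    calc (1:ℝ)/κ ≤ ⌈1/κ⌉₊ := Nat.le_ceil _
      _ ≤ K0 := by exact_mod_cast Nat.le_succ _
  have hκK0 : 1 ≤ κ * (K0:ℝ) := by
    rw [div_le_iff₀ hκ0] at hK0R; linarith [hK0R, mul_comm κ (K0:ℝ)]
  set c : ℝ := max (1/κ) K0 with hcdef
  have hc1 : 1/κ ≤ c := le_max_left _ _
  have hc2 : (K0:ℝ) ≤ c := le_max_right _ _
  have hc0 : 0 < c := lt_of_lt_of_le (by positivity) hc1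
  have hκc : 1 ≤ κ * c := by
    rw [div_le_iff₀ hκ0] at hc1; linarith [mul_comm κ c]
  have hstep : ∀ k : ℕ, 1 ≤ k → κ * ((k:ℝ) * n k) ≤ n (k+1) := by
    intro k hk
    have hnk := hn k hk
    have hkR : (0:ℝ) < (k:ℝ) := by exact_mod_cast hk
    have hp : (0:ℝ) < (k:ℝ) * n k := by positivity
    have := hκ k hk
    rw [le_div_iff₀ hp] at this
    linarith
  set L : ℕ → ℝ := fun k => c / ((k:ℝ) * n k) with hLdef
  have hLpos : ∀ k : ℕ, 1 ≤ k → 0 < L k := by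
    intro k hk
    have h1 := hn k hk
    have h2 : (0:ℝ) < (k:ℝ) := by exact_mod_cast hk
    exact div_pos hc0 (by positivity)
  have hkey : ∀ k : ℕ, K0 ≤ k → 1 ≤ n (k+1) * L k := by
    intro k hk
    have hk1 : 1 ≤ k := le_trans hK0pos hk
    have hnk := hn k hk1
    have hkR : (0:ℝ) < (k:ℝ) := by exact_mod_cast hk1
    have hkn : (0:ℝ) < (k:ℝ) * n k := by positivity
    have h1 : κ * ((k:ℝ) * n k) ≤ n (k+1) := hstep k hk1
    calc (1:ℝ) ≤ κ * c := hκc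
      _ = (κ * ((k:ℝ) * n k)) * (c / ((k:ℝ) * n k)) := by field_simp
      _ ≤ n (k+1) * L k :=
          mul_le_mul_of_nonneg_right h1 (le_of_lt (div_pos hc0 hkn))
  have hLmono : ∀ k : ℕ, K0 ≤ k → L (k+1) ≤ L k := by
    intro k hk
    have hk1 : 1 ≤ k := le_trans hK0pos hk
    have hkR : (1:ℝ) ≤ (k:ℝ) := by exact_mod_cast hk1
    have hnk := hn k hk1
    have hnk1 := hn (k+1) (le_trans hk1 (Nat.le_succ _))
    have hkn : (0:ℝ) < (k:ℝ) * n k := by positivity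
    have hκk1 : 1 ≤ κ * ((k:ℝ)+1) := by
      have hKk : (K0:ℝ) ≤ (k:ℝ) := by exact_mod_cast hk
      calc (1:ℝ) ≤ κ * K0 := hκK0
        _ ≤ κ * ((k:ℝ)+1) := by nlinarith
    have hdenom : (k:ℝ) * n k ≤ (((k+1:ℕ)):ℝ) * n (k+1) := by
      push_cast
      calc (k:ℝ) * n k = 1 * ((k:ℝ) * n k) := by ring
        _ ≤ (κ * ((k:ℝ)+1)) * ((k:ℝ) * n k) :=
            mul_le_mul_of_nonneg_right hκk1 (le_of_lt hkn)
        _ = ((k:ℝ)+1) * (κ * ((k:ℝ) * n k)) := by ring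
        _ ≤ ((k:ℝ)+1) * n (k+1) :=
            mul_le_mul_of_nonneg_left (hstep k hk1) (by linarith)
    exact div_le_div_of_nonneg_left (le_of_lt hc0) hkn hdenom
  -- the nested-interval left endpoints
  set A : ℕ → ℝ := leftEnd ξ n c K0 with hAdef
  have hA0 : A 0 = ξ K0 / n K0 := rfl
  have hAsucc : ∀ j, A (j+1) = max (A j)
      (((⌈n (K0+j+1) * A j - ξ (K0+j+1)⌉ : ℤ) + ξ (K0+j+1)) / n (K0+j+1)
        - L (K0+j+1)) := by
    intro j
    rw [hAdef, hLdef]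
    conv_lhs => rw [leftEnd]
    push_cast
    ring_nf
  -- auxiliary facts about the target point t at each step
  have hkpos : ∀ j : ℕ, 1 ≤ K0 + j := fun j => le_trans hK0pos (Nat.le_add_right _ _)
  have hkpos1 : ∀ j : ℕ, 1 ≤ K0 + j + 1 := fun j => le_trans (hkpos j) (Nat.le_succ _)
  have ht : ∀ j : ℕ,
      A j ≤ ((⌈n (K0+j+1) * A j - ξ (K0+j+1)⌉ : ℤ) + ξ (K0+j+1)) / n (K0+j+1) ∧
      ((⌈n (K0+j+1) * A j - ξ (K0+j+1)⌉ : ℤ) + ξ (K0+j+1)) / n (K0+j+1)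
        ≤ A j + L (K0+j) := by
    intro j
    set k' : ℕ := K0 + j + 1 with hk'def
    have hnk' : 0 < n k' := hn k' (hkpos1 j)
    constructor
    · rw [le_div_iff₀ hnk']
      have := Int.le_ceil (n k' * A j - ξ k')
      linarith
    · rw [div_le_iff₀ hnk']
      have h1 : ((⌈n k' * A j - ξ k'⌉ : ℤ) : ℝ) < n k' * A j - ξ k' + 1 :=
        Int.ceil_lt_add_one _
      have h2 : 1 ≤ n k' * L (K0+j) := by
        have := hkey (K0+j) (Nat.le_add_right _ _)
        simpa [hk'def] using this
      nlinarith [hnk']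
  have hmono : ∀ j, A j ≤ A (j+1) := fun j => by rw [hAsucc]; exact le_max_left _ _
  have hanti : ∀ j, A (j+1) + L (K0+j+1) ≤ A j + L (K0+j) := by
    intro j
    rw [hAsucc]
    obtain ⟨ht1, ht2⟩ := ht j
    have hLm : L (K0+j+1) ≤ L (K0+j) := hLmono (K0+j) (Nat.le_add_right _ _)
    rw [← max_add_add_right]
    apply max_le
    · linarith
    · linarith
  -- each point of the j-th interval satisfies the (K0+j)-th constraint
  have hin : ∀ j : ℕ, ∀ α : ℝ, A j ≤ α → α ≤ A j + L (K0+j) →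
      ∃ m : ℤ, |α * n (K0+j) - ((m:ℝ) + ξ (K0+j))| ≤ c / ((K0+j : ℕ) : ℝ) := by
    intro j
    cases j with
    | zero =>
      intro α hα1 hα2
      refine ⟨0, ?_⟩
      have hnk := hn K0 hK0pos
      have hK0R' : (0:ℝ) < (K0:ℝ) := by exact_mod_cast hK0pos
      rw [hA0] at hα1 hα2
      have hzero : K0 + 0 = K0 := Nat.add_zero K0
      rw [hzero] at hα2 ⊢
      have hLn : L K0 * n K0 = c / (K0:ℝ) := by
        show c / ((K0:ℝ) * n K0) * n K0 = c / (K0:ℝ)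
        field_simp
      have hdiv : ξ K0 / n K0 * n K0 = ξ K0 := by field_simp
      rw [Int.cast_zero, zero_add, abs_le]
      constructor
      · have h1 : ξ K0 / n K0 * n K0 ≤ α * n K0 :=
          mul_le_mul_of_nonneg_right hα1 (le_of_lt hnk)
        have h2 : 0 < c / (K0:ℝ) := div_pos hc0 hK0R'
        rw [hdiv] at h1
        linarith
      · have h1 : α * n K0 ≤ (ξ K0 / n K0 + L K0) * n K0 :=
          mul_le_mul_of_nonneg_right hα2 (le_of_lt hnk)
        have h2 : (ξ K0 / n K0 + L K0) * n K0 = ξ K0 + L K0 * n K0 := by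
          rw [add_mul, hdiv]
        have h3 := hξ K0 hK0pos
        have h4 : 0 ≤ ξ K0 := h3.1
        rw [h2, hLn] at h1
        linarith
    | succ j =>
      intro α hα1 hα2
      have hkk : K0 + (j+1) = K0 + j + 1 := by omega
      rw [hkk] at hα2 ⊢
      set k' : ℕ := K0 + j + 1 with hk'def
      set m : ℤ := ⌈n k' * A j - ξ k'⌉ with hmdef
      have hnk' : 0 < n k' := hn k' (hkpos1 j)
      obtain ⟨ht1, ht2⟩ := ht j
      set T : ℝ := ((m:ℝ) + ξ k') / n k' with hTdef
      have hTn : T * n k' = (m:ℝ) + ξ k' := by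
        rw [hTdef]; field_simp
      have hA1T : A (j+1) ≤ T := by
        rw [hAsucc]
        apply max_le
        · exact ht1
        · have := le_of_lt (hLpos k' (hkpos1 j))
          linarith
      have hA1T' : T - L k' ≤ A (j+1) := by
        rw [hAsucc]; exact le_max_right _ _
      refine ⟨m, ?_⟩
      have habs : |α - T| ≤ L k' := by
        rw [abs_le]
        constructor
        · linarith
        · linarith
      have hLn : L k' * n k' = c / ((k':ℕ):ℝ) := by
        have hkR : (0:ℝ) < ((k':ℕ):ℝ) := by exact_mod_cast hkpos1 j
        show c / (((k':ℕ):ℝ) * n k') * n k' = c / ((k':ℕ):ℝ)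
        field_simp
      calc |α * n k' - ((m:ℝ) + ξ k')| = |α - T| * n k' := by
            rw [← hTn, ← sub_mul, abs_mul, abs_of_pos hnk']
        _ ≤ L k' * n k' := mul_le_mul_of_nonneg_right habs (le_of_lt hnk')
        _ = c / ((k':ℕ):ℝ) := hLn
  -- assemble via supremum of left endpoints
  have monoA : Monotone A := monotone_nat_of_le_succ hmono
  have antiB : Antitone (fun j => A j + L (K0+j)) := antitone_nat_of_succ_le hanti
  have bound : ∀ i j, A i ≤ A j + L (K0+j) := by
    intro i j
    rcases le_total i j with h | h
    · have := monoA h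
      have := le_of_lt (hLpos (K0+j) (hkpos j))
      linarith
    · have h1 : A i ≤ A i + L (K0+i) := by
        have := le_of_lt (hLpos (K0+i) (hkpos i))
        linarith
      exact le_trans h1 (antiB h)
  set α : ℝ := sSup (Set.range A) with hαdef
  have hbdd : BddAbove (Set.range A) := by
    refine ⟨A 0 + L (K0+0), ?_⟩
    rintro x ⟨i, rfl⟩
    exact bound i 0
  have hαge : ∀ j, A j ≤ α := fun j => le_csSup hbdd ⟨j, rfl⟩
  have hαle : ∀ j, α ≤ A j + L (K0+j) := by
    intro j
    apply csSup_le (Set.range_nonempty A)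
    rintro x ⟨i, rfl⟩
    exact bound i j
  refine ⟨c, hc0, α, ?_⟩
  intro k hk
  by_cases hkK : K0 ≤ k
  · obtain ⟨j, rfl⟩ : ∃ j, k = K0 + j := ⟨k - K0, by omega⟩
    obtain ⟨m, hm⟩ := hin j α (hαge j) (hαle j)
    calc nd (α * n (K0+j) - ξ (K0+j)) ≤ |α * n (K0+j) - ξ (K0+j) - (m:ℝ)| :=
          nd_le_abs_sub_int _ m
      _ = |α * n (K0+j) - ((m:ℝ) + ξ (K0+j))| := by ring_nf
      _ ≤ c / ((K0+j : ℕ):ℝ) := hm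
  · push_neg at hkK
    have hkR : (0:ℝ) < (k:ℝ) := by exact_mod_cast hk
    have h1 : (1:ℝ) ≤ c / k := by
      rw [le_div_iff₀ hkR]
      have : (k:ℝ) ≤ (K0:ℝ) := by exact_mod_cast le_of_lt hkK
      linarith
    calc nd (α * n k - ξ k) ≤ 1/2 := abs_sub_round _
      _ ≤ c / k := by linarith
end

section
/- There exists a real number α such that ‖α·k! − {φ k}‖ ≤ c/k for all k ≥ 1, for some constant c > 0, where φ = (1+√5)/2, {x} denotes the fractional part, and ‖x‖ the distance to the nearest integer. -/
noncomputable def tseq (k : ℕ) : ℝ := Int.fract (phi * k)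

noncomputable def Nseq : ℕ → ℤ
  | 0 => 0
  | k + 1 => (k + 1) * Nseq k + ⌊((k : ℝ) + 1) * tseq k⌋

noncomputable def fseq (k : ℕ) : ℝ := ((Nseq k : ℝ) + tseq k) / (Nat.factorial k : ℝ)

lemma fact_pos' (k : ℕ) : (0 : ℝ) < (Nat.factorial k : ℝ) := by
  exact_mod_cast Nat.factorial_pos k

lemma fseq_dist (k : ℕ) :
    dist (fseq k) (fseq (k + 1)) ≤ 1 / (Nat.factorial (k + 1) : ℝ) := by
  have hpos : (0 : ℝ) < (Nat.factorial (k + 1) : ℝ) := fact_pos' (k + 1)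
  have hfact : (Nat.factorial (k + 1) : ℝ) = ((k : ℝ) + 1) * (Nat.factorial k : ℝ) := by
    rw [Nat.factorial_succ]; push_cast; ring
  have h1 : fseq k - fseq (k + 1)
      = (Int.fract (((k : ℝ) + 1) * tseq k) - tseq (k + 1)) / (Nat.factorial (k + 1) : ℝ) := by
    have hk : (0 : ℝ) < (Nat.factorial k : ℝ) := fact_pos' k
    have hfr : Int.fract (((k : ℝ) + 1) * tseq k)
        = ((k : ℝ) + 1) * tseq k - ((⌊((k : ℝ) + 1) * tseq k⌋ : ℤ) : ℝ) :=
      (Int.self_sub_floor _).symm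
    rw [fseq, fseq, Nseq, hfact, hfr]
    push_cast
    generalize ((⌊((k : ℝ) + 1) * tseq k⌋ : ℤ) : ℝ) = B
    field_simp
    ring
  rw [Real.dist_eq, h1, abs_div, abs_of_pos hpos, div_le_div_iff₀ hpos hpos, one_mul]
  have h2 : |Int.fract (((k : ℝ) + 1) * tseq k) - tseq (k + 1)| ≤ 1 := by
    have a1 := Int.fract_nonneg (((k : ℝ) + 1) * tseq k)
    have a2 := Int.fract_lt_one (((k : ℝ) + 1) * tseq k)
    have b1 : 0 ≤ tseq (k + 1) := Int.fract_nonneg _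
    have b2 : tseq (k + 1) < 1 := Int.fract_lt_one _
    rw [abs_le]; constructor <;> linarith
  nlinarith

lemma summable_d : Summable (fun n : ℕ => 1 / (Nat.factorial (n + 1) : ℝ)) := by
  have h : Summable (fun n : ℕ => (1 : ℝ) ^ n / (Nat.factorial n : ℝ)) :=
    Real.summable_pow_div_factorial 1
  simp only [one_pow] at h
  exact (summable_nat_add_iff 1).2 h

lemma fact_ge (n m : ℕ) : Nat.factorial (n + 1) * (n + 1) ^ m ≤ Nat.factorial (n + m + 1) := by
  induction m with
  | zero => simp
  | succ m ih =>
      calc Nat.factorial (n + 1) * (n + 1) ^ (m + 1)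
          = Nat.factorial (n + 1) * (n + 1) ^ m * (n + 1) := by ring
        _ ≤ Nat.factorial (n + m + 1) * (n + m + 2) :=
            Nat.mul_le_mul ih (by omega)
        _ = Nat.factorial (n + m + 2) := by rw [Nat.factorial_succ (n + m + 1)]; ring

lemma tail_bound {n : ℕ} (hn : 1 ≤ n) :
    (∑' m : ℕ, 1 / (Nat.factorial (n + m + 1) : ℝ))
      ≤ 1 / ((Nat.factorial n : ℝ) * n) := by
  have hr0 : (0 : ℝ) ≤ 1 / ((n : ℝ) + 1) := by positivity
  have hr1 : 1 / ((n : ℝ) + 1) < 1 := by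
    rw [div_lt_one (by positivity)]
    have : (1 : ℝ) ≤ (n : ℝ) := by exact_mod_cast hn
    linarith
  have hgs : Summable (fun m : ℕ => (1 / ((n : ℝ) + 1)) ^ m / (Nat.factorial (n + 1) : ℝ)) :=
    (summable_geometric_of_lt_one hr0 hr1).div_const _
  have hle : ∀ m : ℕ, 1 / (Nat.factorial (n + m + 1) : ℝ)
      ≤ (1 / ((n : ℝ) + 1)) ^ m / (Nat.factorial (n + 1) : ℝ) := by
    intro m
    rw [div_pow, one_pow, div_div]
    refine one_div_le_one_div_of_le (by positivity) ?_
    have := fact_ge n m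
    calc ((n : ℝ) + 1) ^ m * (Nat.factorial (n + 1) : ℝ)
        = ((Nat.factorial (n + 1) * (n + 1) ^ m : ℕ) : ℝ) := by push_cast; ring
      _ ≤ ((Nat.factorial (n + m + 1) : ℕ) : ℝ) := by exact_mod_cast this
  have hs : Summable (fun m : ℕ => 1 / (Nat.factorial (n + m + 1) : ℝ)) := by
    refine Summable.of_nonneg_of_le (fun m => by positivity) hle hgs
  calc (∑' m : ℕ, 1 / (Nat.factorial (n + m + 1) : ℝ))
      ≤ ∑' m : ℕ, (1 / ((n : ℝ) + 1)) ^ m / (Nat.factorial (n + 1) : ℝ) :=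
        Summable.tsum_le_tsum hle hs hgs
    _ = (∑' m : ℕ, (1 / ((n : ℝ) + 1)) ^ m) / (Nat.factorial (n + 1) : ℝ) := by
        rw [tsum_div_const]
    _ = (1 - 1 / ((n : ℝ) + 1))⁻¹ / (Nat.factorial (n + 1) : ℝ) := by
        rw [tsum_geometric_of_lt_one hr0 hr1]
    _ ≤ 1 / ((Nat.factorial n : ℝ) * n) := by
        have hfact : (Nat.factorial (n + 1) : ℝ) = ((n : ℝ) + 1) * (Nat.factorial n : ℝ) := by
          rw [Nat.factorial_succ]; push_cast; ring
        have hn' : (1 : ℝ) ≤ (n : ℝ) := by exact_mod_cast hn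
        have h1 : (1 - 1 / ((n : ℝ) + 1)) = (n : ℝ) / ((n : ℝ) + 1) := by
          field_simp
          ring
        rw [h1, inv_div, hfact]
        apply le_of_eq
        have := fact_pos' n
        field_simp
  
theorem stmt8 :
    ∃ c > (0 : ℝ), ∃ α : ℝ, ∀ k : ℕ, 1 ≤ k →
      nd (α * Nat.factorial k - Int.fract (phi * k)) ≤ c / k := by
  have hcs : CauchySeq fseq :=
    cauchySeq_of_dist_le_of_summable _ fseq_dist summable_d
  obtain ⟨α, hα⟩ := cauchySeq_tendsto_of_complete hcs
  refine ⟨1, one_pos, α, fun k hk => ?_⟩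
  have hdist : dist (fseq k) α ≤ ∑' m : ℕ, 1 / (Nat.factorial (k + m + 1) : ℝ) :=
    dist_le_tsum_of_dist_le_of_tendsto _ fseq_dist summable_d hα k
  have hdist2 : |α - fseq k| ≤ 1 / ((Nat.factorial k : ℝ) * k) := by
    rw [abs_sub_comm, ← Real.dist_eq]
    exact hdist.trans (tail_bound hk)
  have hfp := fact_pos' k
  have hkpos : (0 : ℝ) < (k : ℝ) := by exact_mod_cast hk
  have key : |α * (Nat.factorial k : ℝ) - tseq k - (Nseq k : ℝ)| ≤ 1 / (k : ℝ) := by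
    have heq : α * (Nat.factorial k : ℝ) - tseq k - (Nseq k : ℝ)
        = (α - fseq k) * (Nat.factorial k : ℝ) := by
      rw [fseq]; field_simp; ring
    rw [heq, abs_mul, abs_of_pos hfp]
    calc |α - fseq k| * (Nat.factorial k : ℝ)
        ≤ (1 / ((Nat.factorial k : ℝ) * k)) * (Nat.factorial k : ℝ) :=
          mul_le_mul_of_nonneg_right hdist2 hfp.le
      _ = 1 / (k : ℝ) := by field_simp
  have : nd (α * Nat.factorial k - Int.fract (phi * k))
      ≤ |α * (Nat.factorial k : ℝ) - Int.fract (phi * k) - (Nseq k : ℝ)| :=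
    round_le _ (Nseq k)
  calc nd (α * Nat.factorial k - Int.fract (phi * k))
      ≤ |α * (Nat.factorial k : ℝ) - Int.fract (phi * k) - (Nseq k : ℝ)| := this
    _ ≤ 1 / (k : ℝ) := key
end

section
/- Suppose a sequence of positive numbers (n_k)_{k≥1} satisfies inf_k n_{k+1}/(k n_k) > 0. Then there exists α ∈ ℝ and a constant M > 0 such that for every N ≥ 2, the discrepancy D_N of the finite sequence ({α n_k})_{1 ≤ k ≤ N} satisfies D_N ≤ M log N. -/
open scoped Classical
-- assume a.lean contents prepended later; for now re-import by concatenation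

noncomputable def vdc : ℕ → ℝ
  | 0 => 0
  | (n+1) => vdc ((n+1)/2) / 2 + (((n+1) % 2 : ℕ) : ℝ)/2
  decreasing_by exact Nat.div_lt_self (Nat.succ_pos n) one_lt_two

lemma vdc_zero : vdc 0 = 0 := by simp [vdc]

lemma vdc_eq (n : ℕ) (h : n ≠ 0) : vdc n = vdc (n/2)/2 + ((n % 2 : ℕ):ℝ)/2 := by
  obtain ⟨m, rfl⟩ := Nat.exists_eq_succ_of_ne_zero h
  rw [vdc]

lemma vdc_two_mul (k : ℕ) : vdc (2*k) = vdc k / 2 := by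
  rcases Nat.eq_zero_or_pos k with rfl | hk
  · simp [vdc_zero]
  · rw [vdc_eq (2*k) (by omega)]
    simp [Nat.mul_div_cancel_left, Nat.mul_mod_right]

lemma vdc_two_mul_add_one (k : ℕ) : vdc (2*k+1) = vdc k / 2 + 1/2 := by
  rw [vdc_eq (2*k+1) (by omega)]
  have h1 : (2*k+1)/2 = k := by omega
  have h2 : (2*k+1) % 2 = 1 := by omega
  rw [h1, h2]; norm_num

lemma vdc_nonneg (n : ℕ) : 0 ≤ vdc n := by
  induction n using Nat.strong_induction_on with
  | _ n ih =>
    rcases Nat.eq_zero_or_pos n with rfl | hn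
    · simp [vdc_zero]
    · rw [vdc_eq n (by omega)]
      have := ih (n/2) (Nat.div_lt_self hn one_lt_two)
      positivity

lemma vdc_lt_one (n : ℕ) : vdc n < 1 := by
  induction n using Nat.strong_induction_on with
  | _ n ih =>
    rcases Nat.eq_zero_or_pos n with rfl | hn
    · simp [vdc_zero]
    · rw [vdc_eq n (by omega)]
      have h1 := ih (n/2) (Nat.div_lt_self hn one_lt_two)
      have h2 : (n % 2 : ℕ) ≤ 1 := by omega
      have h2' : ((n % 2 : ℕ) : ℝ) ≤ 1 := by exact_mod_cast h2
      linarith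

lemma vdc_pos (n : ℕ) (hn : 1 ≤ n) : 0 < vdc n := by
  induction n using Nat.strong_induction_on with
  | _ n ih =>
    rcases Nat.even_or_odd n with ⟨m, hm⟩ | ⟨m, hm⟩
    · subst hm
      have hm1 : 1 ≤ m := by omega
      have := ih m (by omega) hm1
      rw [show m + m = 2*m by ring, vdc_two_mul]; linarith
    · subst hm
      rw [vdc_two_mul_add_one]
      have := vdc_nonneg m; linarith

lemma vdc_injective : Function.Injective vdc := by
  intro a
  induction a using Nat.strong_induction_on with
  | _ a ih =>
    intro b hab
    rcases Nat.eq_zero_or_pos a with rfl | ha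
    · by_contra hb0
      have : 0 < vdc b := vdc_pos b (by omega)
      rw [← hab, vdc_zero] at this; exact absurd this (lt_irrefl _)
    rcases Nat.eq_zero_or_pos b with rfl | hb
    · have : 0 < vdc a := vdc_pos a ha
      rw [hab, vdc_zero] at this; exact absurd this (lt_irrefl _)
    rcases Nat.even_or_odd a with ⟨x, hx⟩ | ⟨x, hx⟩ <;>
      rcases Nat.even_or_odd b with ⟨y, hy⟩ | ⟨y, hy⟩ <;>
      subst hx <;> subst hy
    · rw [show x + x = 2*x by ring, show y + y = 2*y by ring] at *
      rw [vdc_two_mul, vdc_two_mul] at hab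
      have : vdc x = vdc y := by linarith
      have := ih x (by omega) this; omega
    · exfalso
      rw [show x + x = 2*x by ring] at *
      rw [vdc_two_mul, vdc_two_mul_add_one] at hab
      have h1 := vdc_lt_one x
      have h2 := vdc_nonneg y
      linarith
    · exfalso
      rw [show y + y = 2*y by ring] at *
      rw [vdc_two_mul, vdc_two_mul_add_one] at hab
      have h1 := vdc_lt_one y
      have h2 := vdc_nonneg x
      linarith
    · rw [vdc_two_mul_add_one, vdc_two_mul_add_one] at hab
      have : vdc x = vdc y := by linarith
      have := ih x (by omega) this; omega

lemma vdc_dyadic (j : ℕ) : ∀ k < 2^j, ∃ m : ℕ, (m:ℝ) = 2^j * vdc k := by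
  induction j with
  | zero =>
    intro k hk
    interval_cases k
    exact ⟨0, by simp [vdc_zero]⟩
  | succ j ih =>
    intro k hk
    rcases Nat.eq_zero_or_pos k with rfl | hkpos
    · exact ⟨0, by simp [vdc_zero]⟩
    obtain ⟨m, hm⟩ := ih (k/2) (by omega)
    refine ⟨m + (k % 2) * 2^j, ?_⟩
    rw [vdc_eq k (by omega)]
    push_cast
    rw [hm]
    ring

lemma count_block (j : ℕ) (γ c : ℝ) (hc : 0 ≤ c) :
    (((Finset.Ico (2^j) (2^(j+1))).filter
      (fun k => γ - c/2^j < vdc k ∧ vdc k ≤ γ)).card : ℝ) ≤ 2*c + 1 := by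
  set B : ℤ := ⌊(2^(j+1) : ℝ) * γ⌋
  set A : ℤ := ⌊(2^(j+1) : ℝ) * γ - 2*c⌋
  have hcard : ((Finset.Ico (2^j) (2^(j+1))).filter
      (fun k => γ - c/2^j < vdc k ∧ vdc k ≤ γ)).card ≤ (Finset.Ioc A B).card := by
    apply Finset.card_le_card_of_injOn (fun k => ⌊(2^(j+1):ℝ) * vdc k⌋)
    · intro k hk
      simp only [Finset.mem_coe, Finset.mem_filter, Finset.mem_Ico] at hk
      obtain ⟨⟨hk1, hk2⟩, hlo, hhi⟩ := hk
      obtain ⟨m, hm⟩ := vdc_dyadic (j+1) k hk2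
      have hfl : ⌊(2^(j+1):ℝ) * vdc k⌋ = (m : ℤ) := by
        rw [← hm]; exact_mod_cast Int.floor_natCast m
      simp only [Finset.mem_coe, Finset.mem_Ioc, hfl]
      constructor
      · rw [Int.floor_lt]
        push_cast
        rw [hm]
        have h2j : (0:ℝ) < 2^j := by positivity
        have : (2:ℝ)^(j+1) * (γ - c/2^j) = 2^(j+1)*γ - 2*c := by
          field_simp; ring
        nlinarith [pow_pos (show (0:ℝ) < 2 by norm_num) (j+1)]
      · rw [Int.le_floor]
        push_cast
        rw [hm]
        have : (0:ℝ) < 2^(j+1) := by positivity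
        nlinarith
    · intro k1 h1 k2 h2 heq
      simp only [Finset.mem_coe, Finset.mem_filter, Finset.mem_Ico] at h1 h2
      obtain ⟨m1, hm1⟩ := vdc_dyadic (j+1) k1 h1.1.2
      obtain ⟨m2, hm2⟩ := vdc_dyadic (j+1) k2 h2.1.2
      have e1 : ⌊(2^(j+1):ℝ) * vdc k1⌋ = (m1 : ℤ) := by
        rw [← hm1]; exact_mod_cast Int.floor_natCast m1
      have e2 : ⌊(2^(j+1):ℝ) * vdc k2⌋ = (m2 : ℤ) := by
        rw [← hm2]; exact_mod_cast Int.floor_natCast m2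
      simp only [e1, e2] at heq
      have : (m1:ℝ) = m2 := by exact_mod_cast heq
      rw [hm1, hm2] at this
      have hp : (0:ℝ) < 2^(j+1) := by positivity
      exact vdc_injective (by exact mul_left_cancel₀ (ne_of_gt hp) this)
  have h2 : ((Finset.Ioc A B).card : ℝ) ≤ 2*c + 1 := by
    rw [Int.card_Ioc]
    rcases le_or_gt (B - A) 0 with h | h
    · rw [Int.toNat_of_nonpos h]
      norm_num
      linarith
    · have hBA : ((B - A).toNat : ℝ) = (B:ℝ) - (A:ℝ) := by
        have := Int.toNat_of_nonneg h.le
        exact_mod_cast congrArg (Int.cast : ℤ → ℝ) this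
      rw [hBA]
      have hB : (B:ℝ) ≤ (2^(j+1) : ℝ) * γ := Int.floor_le _
      have hA : (2^(j+1) : ℝ) * γ - 2*c - 1 < A := Int.sub_one_lt_floor _
      linarith
  calc (((Finset.Ico (2^j) (2^(j+1))).filter _).card : ℝ)
      ≤ ((Finset.Ioc A B).card : ℝ) := by exact_mod_cast hcard
    _ ≤ 2*c + 1 := h2

lemma window (N : ℕ) (γ c : ℝ) (hc : 0 ≤ c) :
    (((Finset.Icc 1 N).filter (fun k => γ - c/k < vdc k ∧ vdc k ≤ γ)).card : ℝ)
      ≤ (2*c+1) * (Nat.log 2 N + 1) := by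
  have hsub : (Finset.Icc 1 N).filter (fun k => γ - c/k < vdc k ∧ vdc k ≤ γ) ⊆
      (Finset.range (Nat.log 2 N + 1)).biUnion
        (fun j => (Finset.Ico (2^j) (2^(j+1))).filter
          (fun k => γ - c/2^j < vdc k ∧ vdc k ≤ γ)) := by
    intro k hk
    simp only [Finset.mem_filter, Finset.mem_Icc] at hk
    obtain ⟨⟨hk1, hk2⟩, hlo, hhi⟩ := hk
    have hk0 : k ≠ 0 := by omega
    refine Finset.mem_biUnion.mpr ⟨Nat.log 2 k, ?_, ?_⟩
    · simp only [Finset.mem_range]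
      have := Nat.log_mono_right (b := 2) hk2
      omega
    · simp only [Finset.mem_filter, Finset.mem_Ico]
      have hge : 2 ^ Nat.log 2 k ≤ k := Nat.pow_log_le_self 2 hk0
      have hlt : k < 2 ^ (Nat.log 2 k + 1) := Nat.lt_pow_succ_log_self one_lt_two k
      refine ⟨⟨hge, hlt⟩, ?_, hhi⟩
      have hgeR : (2:ℝ) ^ Nat.log 2 k ≤ k := by exact_mod_cast hge
      have hkp : (0:ℝ) < k := by exact_mod_cast Nat.pos_of_ne_zero hk0
      have h2p : (0:ℝ) < 2 ^ Nat.log 2 k := by positivity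
      have : c / (k:ℝ) ≤ c / 2 ^ Nat.log 2 k := by
        apply div_le_div_of_nonneg_left hc h2p hgeR
      linarith
  calc (((Finset.Icc 1 N).filter _).card : ℝ)
      ≤ (((Finset.range (Nat.log 2 N + 1)).biUnion _).card : ℝ) := by
        exact_mod_cast Finset.card_le_card hsub
    _ ≤ ∑ j ∈ Finset.range (Nat.log 2 N + 1),
          (((Finset.Ico (2^j) (2^(j+1))).filter
            (fun k => γ - c/2^j < vdc k ∧ vdc k ≤ γ)).card : ℝ) := by
        exact_mod_cast Finset.card_biUnion_le
    _ ≤ ∑ j ∈ Finset.range (Nat.log 2 N + 1), (2*c+1) := by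
        apply Finset.sum_le_sum
        intro j _
        exact count_block j γ c hc
    _ = (2*c+1) * (Nat.log 2 N + 1) := by
        rw [Finset.sum_const, Finset.card_range]
        push_cast; ring

noncomputable def Svdc (N : ℕ) (γ : ℝ) : ℝ :=
  ∑ k ∈ Finset.range N, (if vdc k ≤ γ then (1:ℝ) else 0)

noncomputable def clampv (γ : ℝ) : ℝ := max 0 (min γ 1)

lemma clampv_of_nonpos {γ : ℝ} (h : γ ≤ 0) : clampv γ = 0 := by
  unfold clampv
  rw [min_eq_left (by linarith), max_eq_left h]

lemma clampv_of_ge_one {γ : ℝ} (h : 1 ≤ γ) : clampv γ = 1 := by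
  unfold clampv
  rw [min_eq_right h, max_eq_right zero_le_one]

lemma clampv_of_mem {γ : ℝ} (h0 : 0 ≤ γ) (h1 : γ ≤ 1) : clampv γ = γ := by
  unfold clampv
  rw [min_eq_left h1, max_eq_right h0]

lemma clampv_two (γ : ℝ) : 2 * clampv γ = clampv (2*γ) + clampv (2*γ - 1) := by
  rcases le_total γ 0 with h | h
  · rw [clampv_of_nonpos h, clampv_of_nonpos (by linarith), clampv_of_nonpos (by linarith)]
    ring
  rcases le_total γ (1/2) with h2 | h2
  · rw [clampv_of_mem h (by linarith), clampv_of_mem (by linarith) (by linarith),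
      clampv_of_nonpos (by linarith)]
    ring
  rcases le_total γ 1 with h1 | h1
  · rw [clampv_of_mem h (by linarith), clampv_of_ge_one (by linarith),
      clampv_of_mem (by linarith) (by linarith)]
    ring
  · rw [clampv_of_ge_one h1, clampv_of_ge_one (by linarith), clampv_of_ge_one (by linarith)]
    ring

lemma Svdc_two_mul (N : ℕ) (γ : ℝ) :
    Svdc (2*N) γ = Svdc N (2*γ) + Svdc N (2*γ - 1) := by
  induction N with
  | zero => simp [Svdc]
  | succ M ih =>
    have h2 : 2*(M+1) = (2*M) + 1 + 1 := by ring
    rw [h2]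
    unfold Svdc at *
    rw [Finset.sum_range_succ, Finset.sum_range_succ, Finset.sum_range_succ,
      Finset.sum_range_succ, ih]
    have he : (if vdc (2*M) ≤ γ then (1:ℝ) else 0) = (if vdc M ≤ 2*γ then (1:ℝ) else 0) := by
      rw [vdc_two_mul]
      congr 1
      simp only [eq_iff_iff]
      constructor <;> intro <;> linarith
    have ho : (if vdc (2*M+1) ≤ γ then (1:ℝ) else 0)
        = (if vdc M ≤ 2*γ - 1 then (1:ℝ) else 0) := by
      rw [vdc_two_mul_add_one]
      congr 1
      simp only [eq_iff_iff]
      constructor <;> intro <;> linarith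
    rw [he, ho]
    ring

lemma Svdc_neg (N : ℕ) (γ : ℝ) (h : γ < 0) : Svdc N γ = 0 := by
  unfold Svdc
  apply Finset.sum_eq_zero
  intro k _
  have := vdc_nonneg k
  rw [if_neg (by linarith)]

lemma Svdc_full (N : ℕ) (γ : ℝ) (h : 1 ≤ γ) : Svdc N γ = N := by
  unfold Svdc
  rw [Finset.sum_congr rfl (fun k _ => if_pos (le_of_lt (lt_of_lt_of_le (vdc_lt_one k) h)))]
  simp

lemma G_split (M : ℕ) (γ : ℝ) (B : ℝ)
    (h : ∀ γ', |(M:ℝ) * clampv γ' - Svdc M γ'| ≤ B) :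
    |((2*M : ℕ):ℝ) * clampv γ - Svdc (2*M) γ| ≤ B := by
  rw [Svdc_two_mul]
  have hc := clampv_two γ
  rcases lt_or_ge γ (1/2) with hγ | hγ
  · have h0 : Svdc M (2*γ - 1) = 0 := Svdc_neg M _ (by linarith)
    have hc0 : clampv (2*γ - 1) = 0 := clampv_of_nonpos (by linarith)
    have : ((2*M : ℕ):ℝ) * clampv γ - (Svdc M (2*γ) + Svdc M (2*γ-1))
        = (M:ℝ) * clampv (2*γ) - Svdc M (2*γ) := by
      push_cast
      rw [h0]
      rw [hc0] at hc
      have h2 : (M:ℝ) * (2*clampv γ) = (M:ℝ)*(clampv (2*γ) + 0) := by rw [hc]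
      linarith
    rw [this]; exact h _
  · have h1 : Svdc M (2*γ) = M := Svdc_full M _ (by linarith)
    have hc1 : clampv (2*γ) = 1 := clampv_of_ge_one (by linarith)
    have : ((2*M : ℕ):ℝ) * clampv γ - (Svdc M (2*γ) + Svdc M (2*γ-1))
        = (M:ℝ) * clampv (2*γ-1) - Svdc M (2*γ-1) := by
      push_cast
      rw [h1]
      rw [hc1] at hc
      have h2 : (M:ℝ) * (2*clampv γ) = (M:ℝ)*(1 + clampv (2*γ - 1)) := by rw [hc]
      linarith
    rw [this]; exact h _

lemma clampv_mem (γ : ℝ) : 0 ≤ clampv γ ∧ clampv γ ≤ 1 :=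
  ⟨le_max_left _ _, max_le zero_le_one (min_le_right _ _)⟩

lemma G_bound : ∀ N : ℕ, ∀ γ : ℝ, |(N:ℝ) * clampv γ - Svdc N γ| ≤ Nat.log 2 N + 1 := by
  intro N
  induction N using Nat.strong_induction_on with
  | _ N ih =>
    intro γ
    rcases Nat.eq_zero_or_pos N with rfl | hN
    · simp [Svdc]
    rcases Nat.even_or_odd N with ⟨M, hM⟩ | ⟨M, hM⟩
    · -- N = 2M, M ≥ 1
      have hM1 : 1 ≤ M := by omega
      have hNM : N = 2*M := by omega
      subst hNM
      have := G_split M γ (Nat.log 2 M + 1) (ih M (by omega))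
      have hlog : Nat.log 2 M + 1 ≤ Nat.log 2 (2*M) + 1 := by
        have : Nat.log 2 M ≤ Nat.log 2 (2*M) := Nat.log_mono_right (by omega)
        omega
      calc |((2*M : ℕ):ℝ) * clampv γ - Svdc (2*M) γ| ≤ Nat.log 2 M + 1 := this
        _ ≤ Nat.log 2 (2*M) + 1 := by exact_mod_cast hlog
    · -- N = 2M+1
      have hNM : N = 2*M + 1 := by omega
      subst hNM
      rcases Nat.eq_zero_or_pos M with rfl | hM1
      · -- N = 1
        simp only [Nat.mul_zero, Nat.zero_add]
        unfold Svdc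
        rw [Finset.sum_range_one, vdc_zero]
        have hcm := clampv_mem γ
        rcases le_or_gt 0 γ with h | h
        · rw [if_pos h]
          rw [abs_le]
          constructor
          · push_cast; linarith [hcm.1]
          · push_cast; linarith [hcm.2, show (0:ℝ) ≤ (Nat.log 2 1 : ℝ) by positivity]
        · rw [if_neg (by linarith)]
          have hc0 : clampv γ = 0 := clampv_of_nonpos (by linarith)
          rw [hc0]
          simp
      · -- M ≥ 1
        have heven := G_split M γ (Nat.log 2 M + 1) (ih M (by omega))
        have hstep : |((2*M+1 : ℕ):ℝ) * clampv γ - Svdc (2*M+1) γ|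
            ≤ |((2*M : ℕ):ℝ) * clampv γ - Svdc (2*M) γ| + 1 := by
          unfold Svdc
          rw [Finset.sum_range_succ]
          have hcm := clampv_mem γ
          have : ((2*M+1 : ℕ):ℝ) * clampv γ
              - (∑ k ∈ Finset.range (2*M), (if vdc k ≤ γ then (1:ℝ) else 0)
                  + (if vdc (2*M) ≤ γ then (1:ℝ) else 0))
              = (((2*M : ℕ):ℝ) * clampv γ
                  - ∑ k ∈ Finset.range (2*M), (if vdc k ≤ γ then (1:ℝ) else 0))
                + (clampv γ - (if vdc (2*M) ≤ γ then (1:ℝ) else 0)) := by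
            push_cast; ring
          rw [this]
          refine (abs_add_le _ _).trans ?_
          gcongr
          split_ifs <;> rw [abs_le] <;> constructor <;> linarith [hcm.1, hcm.2]
        have hlog : Nat.log 2 M + 2 ≤ Nat.log 2 (2*M+1) + 1 := by
          have h2 : Nat.log 2 (M*2) = Nat.log 2 M + 1 :=
            Nat.log_mul_base one_lt_two (by omega)
          have h3 : Nat.log 2 (M*2) ≤ Nat.log 2 (2*M+1) := Nat.log_mono_right (by omega)
          omega
        calc |((2*M+1 : ℕ):ℝ) * clampv γ - Svdc (2*M+1) γ|
            ≤ |((2*M : ℕ):ℝ) * clampv γ - Svdc (2*M) γ| + 1 := hstep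
          _ ≤ (Nat.log 2 M + 1) + 1 := by linarith [heven]
          _ ≤ Nat.log 2 (2*M+1) + 1 := by exact_mod_cast hlog

def GoodI (f δ v : ℕ → ℝ) (k : ℕ) (p : ℝ × ℝ) : Prop :=
  p.1 ≤ p.2 ∧ p.2 - p.1 = δ k / f k ∧
    ∀ α, p.1 ≤ α → α ≤ p.2 → ∃ m : ℤ, v k + m ≤ α * f k ∧ α * f k ≤ v k + δ k + m

lemma step_lemma (nk v δ a b : ℝ) (hnk : 0 < nk) (hab : 2 ≤ (b - a) * nk)
    (hδ : 0 < δ) (hδ1 : δ ≤ 1) :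
    ∃ a' b', a ≤ a' ∧ b' ≤ b ∧ a' ≤ b' ∧ b' - a' = δ / nk ∧
      ∀ α, a' ≤ α → α ≤ b' → ∃ m : ℤ, v + m ≤ α * nk ∧ α * nk ≤ v + δ + m := by
  set m : ℤ := ⌈a * nk - v⌉ with hm
  have hm1 : a * nk - v ≤ (m:ℝ) := Int.le_ceil _
  have hm2 : (m:ℝ) < a * nk - v + 1 := Int.ceil_lt_add_one _
  refine ⟨(v + m)/nk, (v + m + δ)/nk, ?_, ?_, ?_, ?_, ?_⟩
  · rw [le_div_iff₀ hnk]; linarith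
  · rw [div_le_iff₀ hnk]; linarith
  · exact (div_le_div_iff_of_pos_right hnk).mpr (by linarith)

  · field_simp; ring
  · intro α h1 h2
    refine ⟨m, ?_, ?_⟩
    · have := (div_le_iff₀ hnk).mp h1
      linarith
    · have := (le_div_iff₀ hnk).mp h2
      linarith

noncomputable def Fnest (f δ v : ℕ → ℝ) (K : ℕ)
    (base : {p : ℝ × ℝ // GoodI f δ v K p})
    (step : ∀ i, {p : ℝ × ℝ // GoodI f δ v (K+i) p} →
      {p : ℝ × ℝ // GoodI f δ v (K+(i+1)) p}) :
    ∀ i : ℕ, {p : ℝ × ℝ // GoodI f δ v (K+i) p} :=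
  fun i => Nat.rec base step i

lemma exists_alpha (f δ v : ℕ → ℝ) (K : ℕ)
    (hf : ∀ k, K ≤ k → 0 < f k)
    (hδp : ∀ k, K ≤ k → 0 < δ k) (hδ1 : ∀ k, K ≤ k → δ k ≤ 1)
    (hgrow : ∀ k, K ≤ k → 2 ≤ δ k / f k * f (k+1)) :
    ∃ α : ℝ, ∀ k, K ≤ k → ∃ m : ℤ, v k + m ≤ α * f k ∧ α * f k ≤ v k + δ k + m := by
  have hbase : ∃ p : ℝ × ℝ, GoodI f δ v K p := by
    obtain ⟨a', b', h1, h2, h3, h4, h5⟩ :=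
      step_lemma (f K) (v K) (δ K) 0 (2 / f K) (hf K le_rfl)
        (by rw [sub_zero, div_mul_cancel₀]; exact (hf K le_rfl).ne')
        (hδp K le_rfl) (hδ1 K le_rfl)
    exact ⟨(a', b'), h3, h4, h5⟩
  have hstep : ∀ i (p : ℝ × ℝ), GoodI f δ v (K+i) p →
      ∃ q : ℝ × ℝ, GoodI f δ v (K+(i+1)) q ∧ p.1 ≤ q.1 ∧ q.2 ≤ p.2 := by
    intro i p hp
    obtain ⟨hple, hplen, _⟩ := hp
    obtain ⟨a', b', h1, h2, h3, h4, h5⟩ :=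
      step_lemma (f (K+i+1)) (v (K+i+1)) (δ (K+i+1)) p.1 p.2
        (hf (K+i+1) (by omega))
        (by rw [hplen]; exact hgrow (K+i) (by omega))
        (hδp (K+i+1) (by omega)) (hδ1 (K+i+1) (by omega))
    exact ⟨(a', b'), ⟨h3, h4, h5⟩, h1, h2⟩
  set base : {p : ℝ × ℝ // GoodI f δ v K p} :=
    ⟨Classical.choose hbase, Classical.choose_spec hbase⟩ with hbasedef
  set stp : ∀ i, {p : ℝ × ℝ // GoodI f δ v (K+i) p} →
      {p : ℝ × ℝ // GoodI f δ v (K+(i+1)) p} :=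
    fun i q => ⟨Classical.choose (hstep i q.1 q.2),
      (Classical.choose_spec (hstep i q.1 q.2)).1⟩ with hstpdef
  set F := Fnest f δ v K base stp with hF
  have hFsucc : ∀ i, F (i+1) = stp i (F i) := fun i => rfl
  set a : ℕ → ℝ := fun i => (F i).1.1 with ha
  set b : ℕ → ℝ := fun i => (F i).1.2 with hb
  have hnest : ∀ i, a i ≤ a (i+1) ∧ b (i+1) ≤ b i := by
    intro i
    have := (Classical.choose_spec (hstep i (F i).1 (F i).2)).2
    rw [ha, hb]
    constructor
    · exact this.1
    · exact this.2
  have hamono : Monotone a := monotone_nat_of_le_succ fun i => (hnest i).1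
  have hbanti : Antitone b := antitone_nat_of_succ_le fun i => (hnest i).2
  have hab : ∀ i, a i ≤ b i := fun i => (F i).2.1
  have haij : ∀ i j, a i ≤ b j := by
    intro i j
    calc a i ≤ a (max i j) := hamono (le_max_left _ _)
      _ ≤ b (max i j) := hab _
      _ ≤ b j := hbanti (le_max_right _ _)
  have hbdd : BddAbove (Set.range a) := ⟨b 0, by rintro x ⟨i, rfl⟩; exact haij i 0⟩
  set α := sSup (Set.range a) with hα
  have hαa : ∀ i, a i ≤ α := fun i => le_csSup hbdd ⟨i, rfl⟩
  have hαb : ∀ i, α ≤ b i := fun i =>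
    csSup_le (Set.range_nonempty a) (by rintro x ⟨j, rfl⟩; exact haij j i)
  refine ⟨α, fun k hk => ?_⟩
  obtain ⟨i, rfl⟩ : ∃ i, k = K + i := ⟨k - K, by omega⟩
  exact (F i).2.2.2 α (hαa i) (hαb i)

lemma pointwise (x : ℝ) (k : ℕ) (γ δk c1 c2 : ℝ)
    (hδ : 0 < δk) (hδ1 : δk ≤ 1) (hc1 : δk = c1/k) (hc2 : 2*δk = c2/k)
    (hcon : ∃ m : ℤ, vdc k + m ≤ x ∧ x ≤ vdc k + δk + m) :
    |(if Int.fract x ≤ γ then (1:ℝ) else 0) - (if vdc k ≤ γ then (1:ℝ) else 0)|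
      ≤ (if (γ - c1/(k:ℝ) < vdc k ∧ vdc k ≤ γ) then (1:ℝ) else 0)
        + (if (1 - c2/(k:ℝ) < vdc k ∧ vdc k ≤ 1) then (1:ℝ) else 0) := by
  obtain ⟨m, h1, h2⟩ := hcon
  set v := vdc k with hv
  have hv0 : 0 ≤ v := vdc_nonneg k
  have hv1 : v < 1 := vdc_lt_one k
  set t : ℝ := x - m - v with ht
  have ht0 : 0 ≤ t := by rw [ht]; push_cast; linarith
  have htδ : t ≤ δk := by rw [ht]; push_cast; linarith
  have hfr : Int.fract x = Int.fract (v + t) := by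
    rw [show x = v + t + (m:ℝ) by rw [ht]; ring, Int.fract_add_intCast]
  rw [← hc1, ← hc2]
  rcases lt_or_ge (v + t) 1 with hvt | hvt
  · have hfr2 : Int.fract x = v + t := by
      rw [hfr, Int.fract_eq_self.mpr ⟨by linarith, hvt⟩]
    rw [hfr2]
    by_cases hg : v ≤ γ
    · by_cases hf : v + t ≤ γ
      · rw [if_pos hf, if_pos hg]
        split_ifs <;> norm_num
      · have hcond : γ - δk < v ∧ v ≤ γ := ⟨by linarith, hg⟩
        rw [if_neg hf, if_pos hg, if_pos hcond]
        split_ifs <;> norm_num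
    · have hf : ¬ (v + t ≤ γ) := by push_neg at hg ⊢; linarith
      rw [if_neg hf, if_neg hg]
      split_ifs <;> norm_num
  · have hw : 1 - 2*δk < v ∧ v ≤ 1 := ⟨by linarith, hv1.le⟩
    rw [if_pos hw]
    have e1 : |(if Int.fract x ≤ γ then (1:ℝ) else 0) - (if v ≤ γ then (1:ℝ) else 0)| ≤ 1 := by
      split_ifs <;> norm_num
    have e2 : (0:ℝ) ≤ (if (γ - δk < v ∧ v ≤ γ) then (1:ℝ) else 0) := by
      split_ifs <;> norm_num
    linarith

theorem stmt11 (n : ℕ → ℝ) (hn : ∀ k, 1 ≤ k → 0 < n k)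
    (hinf : ∃ κ > (0 : ℝ), ∀ k, 1 ≤ k → κ ≤ n (k + 1) / (k * n k)) :
    ∃ (α : ℝ) (M : ℝ), 0 < M ∧ ∀ N : ℕ, 2 ≤ N →
      ∀ γ ∈ Set.Ico (0 : ℝ) 1,
        |(N : ℝ) * γ -
          ((Finset.Icc 1 N).filter (fun k => Int.fract (α * n k) ≤ γ)).card| ≤
          M * Real.log N := by
  obtain ⟨κ, hκ, hratio⟩ := hinf
  set K : ℕ := ⌈2/κ⌉₊ + 1 with hK
  have hK1 : 1 ≤ K := by omega
  have hKκ : 2 ≤ κ * K := by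
    have h1 : (2/κ : ℝ) ≤ (⌈2/κ⌉₊ : ℝ) := Nat.le_ceil _
    have h2 : ((⌈2/κ⌉₊ : ℕ) : ℝ) ≤ (K : ℝ) := by exact_mod_cast Nat.le_succ _
    have := (div_le_iff₀ hκ).mp (h1.trans h2)
    linarith
  set δ : ℕ → ℝ := fun k => 2/(κ*k) with hδdef
  have hδpos : ∀ k, K ≤ k → 0 < δ k := by
    intro k hk
    have hk1 : (1:ℝ) ≤ k := by exact_mod_cast hK1.trans hk
    apply div_pos two_pos
    positivity
  have hδ1 : ∀ k, K ≤ k → δ k ≤ 1 := by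
    intro k hk
    have hkK : (K:ℝ) ≤ k := by exact_mod_cast hk
    have hκk : 2 ≤ κ * k := by nlinarith
    rw [hδdef, div_le_one (by nlinarith)]
    linarith
  have hgrow : ∀ k, K ≤ k → 2 ≤ δ k / n k * n (k+1) := by
    intro k hk
    have hk1 : 1 ≤ k := hK1.trans hk
    have hk1' : (1:ℝ) ≤ (k:ℝ) := by exact_mod_cast hk1
    have hnk := hn k hk1
    have hnk1 := hn (k+1) (by omega)
    have hr := hratio k hk1
    have hkpos : (0:ℝ) < k := by linarith
    have hge : κ * (k * n k) ≤ n (k+1) := by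
      have := (le_div_iff₀ (by positivity)).mp hr
      linarith
    rw [hδdef]
    have hκk : (0:ℝ) < κ * k := by positivity
    calc (2:ℝ) = 2/(κ*k) / n k * (κ * (k * n k)) := by field_simp
      _ ≤ 2/(κ*k) / n k * n (k+1) := by
          apply mul_le_mul_of_nonneg_left hge
          positivity
  obtain ⟨α, hα⟩ := exists_alpha n δ vdc K
    (fun k hk => hn k (hK1.trans hk)) hδpos hδ1 hgrow
  set c1 : ℝ := 2/κ with hc1def
  set c2 : ℝ := 4/κ with hc2def
  set C0 : ℝ := (K:ℝ) + 2*c1 + 2*c2 + 5 with hC0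
  refine ⟨α, 2*C0/Real.log 2, by positivity, ?_⟩
  intro N hN γ hγ
  obtain ⟨hγ0, hγ1⟩ := hγ
  set L : ℕ := Nat.log 2 N with hL
  have hL1 : 1 ≤ L := by
    rw [hL]
    calc 1 = Nat.log 2 2 := by exact (Nat.log_eq_one_iff'.mpr (by norm_num)).symm
      _ ≤ Nat.log 2 N := Nat.log_mono_right hN
  -- express card as sum
  have hcard : (((Finset.Icc 1 N).filter (fun k => Int.fract (α * n k) ≤ γ)).card : ℝ)
      = ∑ k ∈ Finset.Icc 1 N, (if Int.fract (α * n k) ≤ γ then (1:ℝ) else 0) := by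
    rw [Finset.card_filter]
    push_cast
    rfl
  set g : ℕ → ℝ := fun k => if vdc k ≤ γ then (1:ℝ) else 0 with hg
  -- vdc count over Icc 1 N
  have hIcc : ∑ k ∈ Finset.Icc 1 N, g k = Svdc (N+1) γ - 1 := by
    have h1 : Svdc (N+1) γ = ∑ i ∈ Finset.range N, g (i+1) + g 0 := by
      rw [Svdc, Finset.sum_range_succ']
    have h2 : g 0 = 1 := by
      rw [hg]
      simp only [vdc_zero]
      rw [if_pos hγ0]
    have h3 : ∑ k ∈ Finset.Icc 1 N, g k = ∑ i ∈ Finset.range N, g (1+i) := by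
      rw [← Finset.Ico_add_one_right_eq_Icc, Finset.sum_Ico_eq_sum_range]
      simp
    have h4 : ∑ i ∈ Finset.range N, g (1+i) = ∑ i ∈ Finset.range N, g (i+1) := by
      apply Finset.sum_congr rfl
      intro i _
      rw [add_comm]
    rw [h3, h4, h1, h2]
    ring
  -- main discrepancy part
  have hdisc : |(N:ℝ) * γ - ∑ k ∈ Finset.Icc 1 N, g k| ≤ (L:ℝ) + 3 := by
    have hG := G_bound (N+1) γ
    have hclamp : clampv γ = γ := clampv_of_mem hγ0 hγ1.le
    rw [hclamp] at hG
    have hlog : Nat.log 2 (N+1) ≤ L + 1 := by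
      have e1 : Nat.log 2 (N*2) = Nat.log 2 N + 1 := Nat.log_mul_base one_lt_two (by omega)
      have e2 : Nat.log 2 (N+1) ≤ Nat.log 2 (N*2) := Nat.log_mono_right (by omega)
      omega
    have hlogR : (Nat.log 2 (N+1) : ℝ) ≤ (L:ℝ) + 1 := by exact_mod_cast hlog
    rw [hIcc]
    have : (N:ℝ) * γ - (Svdc (N+1) γ - 1)
        = (((N+1:ℕ)):ℝ) * γ - Svdc (N+1) γ + (1 - γ) := by push_cast; ring
    rw [this]
    have habs : |(((N+1:ℕ)):ℝ) * γ - Svdc (N+1) γ + (1 - γ)|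
        ≤ |(((N+1:ℕ)):ℝ) * γ - Svdc (N+1) γ| + |1 - γ| := abs_add_le _ _
    have h1γ : |1 - γ| ≤ 1 := by rw [abs_le]; constructor <;> linarith
    linarith
  -- pointwise comparison sum
  set w1 : ℕ → ℝ := fun k => if (γ - c1/(k:ℝ) < vdc k ∧ vdc k ≤ γ) then (1:ℝ) else 0 with hw1
  set w2 : ℕ → ℝ := fun k => if ((1:ℝ) - c2/(k:ℝ) < vdc k ∧ vdc k ≤ 1) then (1:ℝ) else 0 with hw2
  set wK : ℕ → ℝ := fun k => if k < K then (1:ℝ) else 0 with hwK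
  have hpt : ∀ k ∈ Finset.Icc 1 N,
      |(if Int.fract (α * n k) ≤ γ then (1:ℝ) else 0) - g k| ≤ wK k + w1 k + w2 k := by
    intro k hk
    simp only [Finset.mem_Icc] at hk
    rcases lt_or_ge k K with hkK | hkK
    · have h1 : |(if Int.fract (α * n k) ≤ γ then (1:ℝ) else 0) - g k| ≤ 1 := by
        simp only [hg]
        split_ifs <;> norm_num
      have h2 : wK k = 1 := by simp only [hwK]; rw [if_pos hkK]
      have h3 : (0:ℝ) ≤ w1 k := by simp only [hw1]; split_ifs <;> norm_num
      have h4 : (0:ℝ) ≤ w2 k := by simp only [hw2]; split_ifs <;> norm_num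
      rw [h2]; linarith
    · have hk1 : 1 ≤ k := hk.1
      have hk1' : (1:ℝ) ≤ (k:ℝ) := by exact_mod_cast hk1
      have hkne : (k:ℝ) ≠ 0 := by linarith
      have h2 : wK k = 0 := by simp only [hwK]; rw [if_neg (by omega)]
      have hpw := pointwise (α * n k) k γ (δ k) c1 c2 (hδpos k hkK) (hδ1 k hkK)
        (by rw [hδdef, hc1def]; field_simp)
        (by rw [hδdef, hc2def]; field_simp; ring)
        (hα k hkK)
      rw [h2, zero_add]
      exact hpw
  -- sums of windows
  have hsum1 : ∑ k ∈ Finset.Icc 1 N, w1 k ≤ (2*c1+1) * ((L:ℝ) + 1) := by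
    have : ∑ k ∈ Finset.Icc 1 N, w1 k
        = (((Finset.Icc 1 N).filter (fun (k : ℕ) => γ - c1/(k:ℝ) < vdc k ∧ vdc k ≤ γ)).card : ℝ) := by
      simp only [hw1]
      rw [Finset.card_filter]
      push_cast
      rfl
    rw [this]
    have := window N γ c1 (by rw [hc1def]; positivity)
    exact_mod_cast this
  have hsum2 : ∑ k ∈ Finset.Icc 1 N, w2 k ≤ (2*c2+1) * ((L:ℝ) + 1) := by
    have : ∑ k ∈ Finset.Icc 1 N, w2 k
        = (((Finset.Icc 1 N).filter (fun (k : ℕ) => (1:ℝ) - c2/(k:ℝ) < vdc k ∧ vdc k ≤ 1)).card : ℝ) := by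
      simp only [hw2]
      rw [Finset.card_filter]
      push_cast
      rfl
    rw [this]
    have := window N 1 c2 (by rw [hc2def]; positivity)
    exact_mod_cast this
  have hsumK : ∑ k ∈ Finset.Icc 1 N, wK k ≤ (K:ℝ) := by
    have h1 : ∑ k ∈ Finset.Icc 1 N, wK k
        = (((Finset.Icc 1 N).filter (fun k => k < K)).card : ℝ) := by
      simp only [hwK]
      rw [Finset.card_filter]
      push_cast
      rfl
    rw [h1]
    have h2 : (Finset.Icc 1 N).filter (fun k => k < K) ⊆ Finset.Icc 1 K := by
      intro k hk
      simp only [Finset.mem_filter, Finset.mem_Icc] at hk ⊢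
      omega
    have h3 := Finset.card_le_card h2
    have h4 : (Finset.Icc 1 K).card = K := by rw [Nat.card_Icc]; omega
    rw [h4] at h3
    exact_mod_cast h3
  -- combine
  have hmain : |(N:ℝ) * γ -
      ((Finset.Icc 1 N).filter (fun k => Int.fract (α * n k) ≤ γ)).card|
      ≤ C0 * ((L:ℝ) + 1) := by
    rw [hcard]
    have hsplit : |(N:ℝ)*γ - ∑ k ∈ Finset.Icc 1 N, (if Int.fract (α * n k) ≤ γ then (1:ℝ) else 0)|
        ≤ |(N:ℝ)*γ - ∑ k ∈ Finset.Icc 1 N, g k|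
          + ∑ k ∈ Finset.Icc 1 N,
              |(if Int.fract (α * n k) ≤ γ then (1:ℝ) else 0) - g k| := by
      have e : (N:ℝ)*γ - ∑ k ∈ Finset.Icc 1 N, (if Int.fract (α * n k) ≤ γ then (1:ℝ) else 0)
          = ((N:ℝ)*γ - ∑ k ∈ Finset.Icc 1 N, g k)
            + ∑ k ∈ Finset.Icc 1 N,
                (g k - (if Int.fract (α * n k) ≤ γ then (1:ℝ) else 0)) := by
        rw [Finset.sum_sub_distrib]; ring
      rw [e]
      refine (abs_add_le _ _).trans ?_
      gcongr
      refine (Finset.abs_sum_le_sum_abs _ _).trans ?_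
      apply le_of_eq
      apply Finset.sum_congr rfl
      intro k _
      rw [abs_sub_comm]
    have hptsum : ∑ k ∈ Finset.Icc 1 N,
        |(if Int.fract (α * n k) ≤ γ then (1:ℝ) else 0) - g k|
        ≤ ∑ k ∈ Finset.Icc 1 N, (wK k + w1 k + w2 k) :=
      Finset.sum_le_sum hpt
    rw [Finset.sum_add_distrib, Finset.sum_add_distrib] at hptsum
    have hLpos : (1:ℝ) ≤ (L:ℝ) + 1 := by
      have : (0:ℝ) ≤ (L:ℝ) := Nat.cast_nonneg L
      linarith
    have hKnn : (0:ℝ) ≤ (K:ℝ) := by positivity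
    have : (L:ℝ) + 3 + ((K:ℝ) + (2*c1+1)*((L:ℝ)+1) + (2*c2+1)*((L:ℝ)+1)) ≤ C0 * ((L:ℝ)+1) := by
      rw [hC0]
      have hc1p : 0 < c1 := by rw [hc1def]; positivity
      have hc2p : 0 < c2 := by rw [hc2def]; positivity
      nlinarith [hLpos, hKnn, hc1p.le, hc2p.le]
    linarith [hsplit, hdisc, hsum1, hsum2, hsumK]
  -- convert to Real.log
  have hlogN : (L:ℝ) * Real.log 2 ≤ Real.log N := by
    have h1 : (2:ℝ)^L ≤ N := by
      exact_mod_cast Nat.pow_log_le_self 2 (by omega)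
    calc (L:ℝ) * Real.log 2 = Real.log ((2:ℝ)^L) := by rw [Real.log_pow]
      _ ≤ Real.log N := Real.log_le_log (by positivity) h1
  have hlog2pos : 0 < Real.log 2 := Real.log_pos (by norm_num)
  have hC0pos : 0 < C0 := by
    rw [hC0]
    have hc1p : 0 < c1 := by rw [hc1def]; positivity
    have hc2p : 0 < c2 := by rw [hc2def]; positivity
    positivity
  calc |(N:ℝ) * γ - ((Finset.Icc 1 N).filter (fun k => Int.fract (α * n k) ≤ γ)).card|
      ≤ C0 * ((L:ℝ) + 1) := hmain
    _ ≤ C0 * (2*(L:ℝ)) := by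
        apply mul_le_mul_of_nonneg_left _ hC0pos.le
        have : (1:ℝ) ≤ (L:ℝ) := by exact_mod_cast hL1
        linarith
    _ = 2*C0 * (L:ℝ) := by ring
    _ ≤ 2*C0 * (Real.log N / Real.log 2) := by
        apply mul_le_mul_of_nonneg_left _ (by positivity)
        rw [le_div_iff₀ hlog2pos]
        linarith
    _ = 2*C0/Real.log 2 * Real.log N := by ring
end

section
/- There exists α ∈ ℝ and a constant M > 0 such that for every N ≥ 2, the discrepancy D_N of the finite sequence ({α·n!})_{1 ≤ n ≤ N} satisfies D_N ≤ M log N. -/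
open scoped Classical

noncomputable section
namespace S12

/-- van der Corput value: binary bit-reversal of n into [0,1). -/
def v : ℕ → ℝ
  | 0 => 0
  | (n+1) => (((n+1) % 2 : ℕ) : ℝ) / 2 + v ((n+1)/2) / 2
  decreasing_by exact Nat.div_lt_self (Nat.succ_pos n) one_lt_two

lemma v_zero : v 0 = 0 := by simp [v]

lemma v_rec (n : ℕ) (hn : 0 < n) : v n = ((n % 2 : ℕ) : ℝ) / 2 + v (n/2) / 2 := by
  obtain ⟨m, rfl⟩ := Nat.exists_eq_succ_of_ne_zero hn.ne'
  rw [v]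

lemma v_rec' (n : ℕ) : v n = ((n % 2 : ℕ) : ℝ) / 2 + v (n/2) / 2 := by
  rcases Nat.eq_zero_or_pos n with h | h
  · simp [h, v_zero]
  · exact v_rec n h

lemma v_nonneg (n : ℕ) : 0 ≤ v n := by
  induction n using Nat.strong_induction_on with
  | _ n ih =>
    rcases Nat.eq_zero_or_pos n with h | h
    · simp [h, v_zero]
    · rw [v_rec n h]
      have := ih (n/2) (Nat.div_lt_self h one_lt_two)
      positivity

lemma v_lt_one (n : ℕ) : v n < 1 := by
  induction n using Nat.strong_induction_on with
  | _ n ih =>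
    rcases Nat.eq_zero_or_pos n with h | h
    · simp [h, v_zero]
    · rw [v_rec n h]
      have h2 := ih (n/2) (Nat.div_lt_self h one_lt_two)
      have hm : ((n % 2 : ℕ) : ℝ) ≤ 1 := by
        have := Nat.mod_lt n (show 0 < 2 by norm_num)
        exact_mod_cast Nat.lt_succ_iff.mp this
      nlinarith


lemma v_eq_zero {n : ℕ} (h : v n = 0) : n = 0 := by
  induction n using Nat.strong_induction_on with
  | _ n ih =>
    by_contra hn0
    have hn : 0 < n := Nat.pos_of_ne_zero hn0
    rw [v_rec n hn] at h
    have h1 : (0:ℝ) ≤ ((n % 2 : ℕ) : ℝ) / 2 := by positivity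
    have h2 : (0:ℝ) ≤ v (n/2) / 2 := by have := v_nonneg (n/2); positivity
    have hm : ((n % 2 : ℕ) : ℝ) / 2 = 0 := by linarith
    have hv : v (n/2) / 2 = 0 := by linarith
    have hd : n / 2 = 0 := ih (n/2) (Nat.div_lt_self hn one_lt_two) (by linarith)
    have hmod : n % 2 = 0 := by exact_mod_cast (by linarith : ((n % 2 : ℕ) : ℝ) = 0)
    omega

lemma v_inj : Function.Injective v := by
  intro a b hab
  induction a using Nat.strong_induction_on generalizing b with
  | _ a ih =>
    rcases Nat.eq_zero_or_pos a with ha | ha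
    · subst ha; exact (v_eq_zero (by rw [← hab, v_zero])).symm
    rcases Nat.eq_zero_or_pos b with hb | hb
    · subst hb; exact (v_eq_zero (by rw [hab, v_zero]))
    rw [v_rec a ha, v_rec b hb] at hab
    have hva := v_nonneg (a/2); have hvb := v_nonneg (b/2)
    have hva1 := v_lt_one (a/2); have hvb1 := v_lt_one (b/2)
    have hmod : a % 2 = b % 2 := by
      have h2 : a % 2 < 2 := Nat.mod_lt a (by norm_num)
      have h2' : b % 2 < 2 := Nat.mod_lt b (by norm_num)
      interval_cases h : a % 2 <;> interval_cases h' : b % 2 <;>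
        simp_all <;> nlinarith
    have hdiv : a / 2 = b / 2 := by
      apply ih (a/2) (Nat.div_lt_self ha one_lt_two)
      rw [hmod] at hab
      linarith
    omega

lemma v_add : ∀ (j A m : ℕ), 2^j ∣ A → m < 2^j → v (A + m) = v A + v m := by
  intro j
  induction j with
  | zero => intro A m _ hm; interval_cases m; simp [v_zero]
  | succ j ih =>
    intro A m hA hm
    have hA2 : 2 ∣ A := dvd_trans (dvd_pow_self 2 (Nat.succ_ne_zero j)) hA
    obtain ⟨A', rfl⟩ := hA2
    have hmod : (2 * A' + m) % 2 = m % 2 := by omega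
    have hdiv : (2 * A' + m) / 2 = A' + m / 2 := by omega
    have hA' : 2^j ∣ A' := by
      rcases hA with ⟨c, hc⟩
      refine ⟨c, ?_⟩
      have h2 : 2 * A' = 2 * (2^j * c) := by rw [hc, pow_succ]; ring
      omega
    have hm2 : m / 2 < 2^j := by
      have : m < 2 * 2^j := by rw [← pow_succ']; exact hm
      omega
    rw [v_rec' (2*A'+m), hmod, hdiv, ih A' (m/2) hA' hm2, v_rec' (2*A'), v_rec' m]
    have e1 : (2*A') % 2 = 0 := by omega
    have e2 : (2*A') / 2 = A' := by omega
    rw [e1, e2]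
    push_cast
    ring

lemma v_pow (t : ℕ) : v (2^t) = 1 / 2^(t+1) := by
  induction t with
  | zero => rw [show (2:ℕ)^0 = 1 by norm_num, v_rec 1 one_pos]; simp [v_zero]
  | succ t ih =>
    rw [v_rec _ (Nat.two_pow_pos _)]
    have h1 : (2:ℕ)^(t+1) % 2 = 0 := by
      simp [pow_succ, Nat.mul_mod_left]
    have h2 : (2:ℕ)^(t+1) / 2 = 2^t := by
      rw [pow_succ]; omega
    rw [h1, h2, ih]
    push_cast
    rw [pow_succ]
    ring

/-- for m < 2^j, 2^j * v m is a natural number < 2^j -/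
lemma v_grid : ∀ (j m : ℕ), m < 2^j → ∃ i : ℕ, i < 2^j ∧ v m = (i : ℝ) / 2^j := by
  intro j
  induction j with
  | zero => intro m hm; interval_cases m; exact ⟨0, by norm_num, by simp [v_zero]⟩
  | succ j ih =>
    intro m hm
    rcases Nat.eq_zero_or_pos m with h | h
    · exact ⟨0, by positivity, by simp [h, v_zero]⟩
    have hm2 : m / 2 < 2^j := by
      have : m < 2 * 2^j := by rw [← pow_succ']; exact hm
      omega
    obtain ⟨i, hi, hvi⟩ := ih (m/2) hm2
    refine ⟨(m % 2) * 2^j + i, ?_, ?_⟩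
    · have : m % 2 < 2 := Nat.mod_lt m (by norm_num); 
      have : m % 2 ≤ 1 := by omega
      calc (m % 2) * 2^j + i < (m%2) * 2^j + 2^j := by omega
        _ ≤ 1 * 2^j + 2^j := by
            exact Nat.add_le_add_right (Nat.mul_le_mul_right _ this) _
        _ = 2^(j+1) := by rw [pow_succ]; ring
    · rw [v_rec m h, hvi]
      push_cast
      rw [pow_succ]
      field_simp

/-- for 2^t ≤ n < 2^(t+1), v n = m / 2^(t+1) with m odd -/
lemma v_odd : ∀ (t n : ℕ), 2^t ≤ n → n < 2^(t+1) → ∃ m : ℕ, m % 2 = 1 ∧ v n = (m : ℝ) / 2^(t+1) := by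
  intro t n h1 h2
  have hd : 2^t ∣ 2^t := dvd_rfl
  have : n = 2^t + (n - 2^t) := by omega
  rw [this, v_add t (2^t) (n - 2^t) hd (by
    have : n < 2 * 2^t := by rw [← pow_succ']; exact h2
    omega)]
  obtain ⟨i, hi, hvi⟩ := v_grid t (n - 2^t) (by
    have : n < 2 * 2^t := by rw [← pow_succ']; exact h2
    omega)
  refine ⟨2*i + 1, by omega, ?_⟩
  rw [v_pow, hvi]
  push_cast
  rw [pow_succ]
  field_simp
  ring

/-- factorial-base digits -/
def a (k : ℕ) : ℕ := ⌊(k : ℝ) * v (k-1)⌋₊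

lemma a_lt (k : ℕ) (hk : 1 ≤ k) : a k < k := by
  have h1 : (k : ℝ) * v (k-1) < k := by
    have := v_lt_one (k-1)
    have hk' : (0:ℝ) < k := by exact_mod_cast hk
    nlinarith
  have h0 : (0:ℝ) ≤ (k:ℝ) * v (k-1) := mul_nonneg (by positivity) (v_nonneg _)
  unfold a
  exact (Nat.floor_lt h0).mpr h1

lemma a_bounds (n : ℕ) : ((a (n+1) : ℝ)) / (n+1) ≤ v n ∧ v n < ((a (n+1) : ℝ) + 1) / (n+1) := by
  have hpos : (0:ℝ) < (n:ℝ)+1 := by positivity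
  have hnn : (0:ℝ) ≤ ((n:ℝ)+1) * v n := by have := v_nonneg n; positivity
  have h1 : ((a (n+1) : ℝ)) ≤ ((n:ℝ)+1) * v n := by
    have : (a (n+1) : ℝ) = (⌊((n+1:ℕ) : ℝ) * v n⌋₊ : ℝ) := by simp [a]
    rw [this]
    push_cast
    exact Nat.floor_le (by push_cast at hnn ⊢; linarith)
  have h2 : ((n:ℝ)+1) * v n < (a (n+1) : ℝ) + 1 := by
    have : (a (n+1) : ℝ) = (⌊((n+1:ℕ) : ℝ) * v n⌋₊ : ℝ) := by simp [a]
    rw [this]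
    push_cast
    exact Nat.lt_floor_add_one _
  constructor
  · rw [div_le_iff₀ hpos]; linarith
  · rw [lt_div_iff₀ hpos]; linarith

/-- tail terms -/
def f (n : ℕ) (k : ℕ) : ℝ := (a (n+1+k) : ℝ) * (Nat.factorial n) / (Nat.factorial (n+1+k))

lemma f_nonneg (n k : ℕ) : 0 ≤ f n k := by
  unfold f
  positivity

lemma f_le (n k : ℕ) : f n k ≤ (Nat.factorial n : ℝ) / (Nat.factorial (n+k)) - (Nat.factorial n : ℝ) / (Nat.factorial (n+1+k)) := by
  unfold f
  have ha : (a (n+1+k) : ℝ) ≤ (n:ℝ)+(k:ℝ) := by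
    have := a_lt (n+1+k) (by omega)
    have h2 : a (n+1+k) ≤ n + k := by omega
    exact_mod_cast h2
  have hfac : (Nat.factorial (n+1+k) : ℝ) = ((n:ℝ)+1+(k:ℝ)) * (Nat.factorial (n+k)) := by
    have e : n+1+k = (n+k)+1 := by omega
    rw [e, Nat.factorial_succ]; push_cast; ring
  have hpos1 : (0:ℝ) < Nat.factorial (n+k) := by exact_mod_cast Nat.factorial_pos _
  have hpos2 : (0:ℝ) < Nat.factorial (n+1+k) := by exact_mod_cast Nat.factorial_pos _
  have hposn : (0:ℝ) < Nat.factorial n := by exact_mod_cast Nat.factorial_pos _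
  have key : (Nat.factorial n : ℝ) / (Nat.factorial (n+k)) - (Nat.factorial n : ℝ) / (Nat.factorial (n+1+k))
      = ((n:ℝ)+(k:ℝ)) * (Nat.factorial n) / (Nat.factorial (n+1+k)) := by
    rw [hfac]
    field_simp
    ring
  rw [key]
  gcongr

lemma f_sum_le (n K : ℕ) : ∑ k ∈ Finset.range K, f n k ≤ 1 := by
  calc ∑ k ∈ Finset.range K, f n k
      ≤ ∑ k ∈ Finset.range K, ((Nat.factorial n : ℝ) / (Nat.factorial (n+k)) - (Nat.factorial n : ℝ) / (Nat.factorial (n+1+k))) :=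
        Finset.sum_le_sum (fun k _ => f_le n k)
    _ = (Nat.factorial n : ℝ) / (Nat.factorial (n+0)) - (Nat.factorial n : ℝ) / (Nat.factorial (n+K)) := by
        have : ∀ k, (Nat.factorial n : ℝ) / (Nat.factorial (n+1+k)) = (Nat.factorial n : ℝ) / (Nat.factorial (n+(k+1))) := by
          intro k
          have h : n+1+k = n+(k+1) := by omega
          rw [h]
        simp_rw [this]
        exact Finset.sum_range_sub' (fun k => (Nat.factorial n : ℝ) / (Nat.factorial (n+k))) K
    _ ≤ 1 := by
        have h1 : (0:ℝ) < Nat.factorial (n+K) := by exact_mod_cast Nat.factorial_pos _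
        have h2 : (0:ℝ) < Nat.factorial n := by exact_mod_cast Nat.factorial_pos _
        have : (Nat.factorial n : ℝ) / (Nat.factorial (n+0)) = 1 := by
          rw [Nat.add_zero]; field_simp
        rw [this]
        have : 0 ≤ (Nat.factorial n : ℝ) / (Nat.factorial (n+K)) := by positivity
        linarith

lemma f_summable (n : ℕ) : Summable (f n) :=
  summable_of_sum_range_le (f_nonneg n) (f_sum_le n)

/-- the tail T n = fract(α n!) -/
def T (n : ℕ) : ℝ := ∑' k, f n k

lemma T_nonneg (n : ℕ) : 0 ≤ T n := tsum_nonneg (f_nonneg n)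

lemma T_le_one (n : ℕ) : T n ≤ 1 := Summable.tsum_le_of_sum_range_le (f_summable n) (f_sum_le n)

lemma T_rec (n : ℕ) : T n = ((a (n+1) : ℝ) + T (n+1)) / ((n:ℝ)+1) := by
  have h := Summable.tsum_eq_zero_add (f_summable n)
  have hshift : ∀ k, f n (k+1) = f (n+1) k / ((n:ℝ)+1) := by
    intro k
    unfold f
    have e1 : n+1+(k+1) = (n+1)+1+k := by omega
    have e2 : (Nat.factorial (n+1) : ℝ) = ((n:ℝ)+1) * (Nat.factorial n) := by
      rw [Nat.factorial_succ]; push_cast; ring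
    rw [e1, e2]
    have hpos : (0:ℝ) < Nat.factorial ((n+1)+1+k) := by exact_mod_cast Nat.factorial_pos _
    field_simp
  have h0 : f n 0 = (a (n+1) : ℝ) / ((n:ℝ)+1) := by
    unfold f
    have : (Nat.factorial (n+1+0) : ℝ) = ((n:ℝ)+1) * (Nat.factorial n) := by
      rw [Nat.add_zero, Nat.factorial_succ]; push_cast; ring
    rw [this]
    have hpos : (0:ℝ) < Nat.factorial n := by exact_mod_cast Nat.factorial_pos _
    field_simp
  unfold T
  rw [h, h0]
  simp_rw [hshift]
  rw [tsum_div_const]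
  have hpos : (0:ℝ) < (n:ℝ)+1 := by positivity
  field_simp

lemma a_pow_succ (t : ℕ) (ht : 1 ≤ t) : a (2^t + 1) = 0 := by
  unfold a
  have h1 : 2^t + 1 - 1 = 2^t := by simp
  rw [h1, v_pow]
  apply Nat.floor_eq_zero.mpr
  have h2 : (2:ℝ) ≤ 2^t := by
    have : (2:ℝ)^1 ≤ 2^t := by
      apply pow_le_pow_right₀ (by norm_num) ht
    simpa using this
  have h3 : (0:ℝ) < 2^t := by positivity
  push_cast
  rw [pow_succ]
  rw [mul_one_div, div_lt_one (by positivity)]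
  linarith

lemma T_lt_one (n : ℕ) : T n < 1 := by
  have step : ∀ m, T (m+1) < 1 → T m < 1 := by
    intro m hm
    rw [T_rec m]
    have ha : (a (m+1) : ℝ) ≤ m := by
      have := a_lt (m+1) (by omega)
      exact_mod_cast Nat.lt_succ_iff.mp this
    have hpos : (0:ℝ) < (m:ℝ)+1 := by positivity
    rw [div_lt_one hpos]
    linarith
  have down : ∀ d m, T (m + d) < 1 → T m < 1 := by
    intro d
    induction d with
    | zero => intro m h; simpa using h
    | succ d ih =>
      intro m h
      apply step
      apply ih (m+1)
      have : m + 1 + d = m + (d+1) := by omega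
      rw [this]; exact h
  have hpow : T (2^(n+1)) < 1 := by
    rw [T_rec (2^(n+1)), a_pow_succ (n+1) (by omega)]
    have h1 : T (2^(n+1) + 1) ≤ 1 := T_le_one _
    have hpos : (0:ℝ) < ((2^(n+1) : ℕ):ℝ)+1 := by positivity
    rw [div_lt_one hpos]
    have h2 : (1:ℕ) ≤ 2^(n+1) := Nat.one_le_two_pow
    have h2' : (1:ℝ) ≤ ((2^(n+1) : ℕ):ℝ) := by exact_mod_cast h2
    push_cast at h2' ⊢
    linarith
  have hle : n ≤ 2^(n+1) := (Nat.lt_two_pow_self (n := n)).le.trans (Nat.pow_le_pow_right (by norm_num) (by omega))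
  exact down (2^(n+1) - n) n (by rw [Nat.add_sub_cancel' hle]; exact hpow)

lemma T_close (n : ℕ) : |T n - v n| < 1 / ((n:ℝ)+1) := by
  obtain ⟨hb1, hb2⟩ := a_bounds n
  have hpos : (0:ℝ) < (n:ℝ)+1 := by positivity
  have h0 := T_nonneg (n+1)
  have h1 := T_lt_one (n+1)
  have hb1' : (a (n+1):ℝ) ≤ ((n:ℝ)+1) * v n := by
    rw [div_le_iff₀ hpos] at hb1; linarith
  have hb2' : ((n:ℝ)+1) * v n < (a (n+1):ℝ) + 1 := by
    rw [lt_div_iff₀ hpos] at hb2; linarith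
  have e1' : ((n:ℝ)+1) * T n = (a (n+1):ℝ) + T (n+1) := by
    rw [T_rec n]; field_simp
  rw [abs_lt]
  constructor
  · rw [neg_lt, neg_sub, lt_div_iff₀ hpos]
    nlinarith
  · rw [lt_div_iff₀ hpos]
    nlinarith

/-- α := T 1.  α * n! = integer + T n. -/
lemma fract_T (n : ℕ) (hn : 1 ≤ n) : Int.fract (T 1 * (Nat.factorial n)) = T n := by
  have hsum : T 1 * (Nat.factorial n) = ∑' k, f 1 k * (Nat.factorial n) := by
    rw [T, tsum_mul_right]
  have hf : ∀ k, f 1 k * (Nat.factorial n) = (a (2+k) : ℝ) * (Nat.factorial n) / (Nat.factorial (2+k)) := by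
    intro k
    unfold f
    have : Nat.factorial 1 = 1 := rfl
    rw [show (1:ℕ)+1+k = 2+k from rfl, this]
    push_cast
    ring
  have hsummable : Summable (fun k => f 1 k * (Nat.factorial n)) := (f_summable 1).mul_right _
  have hsplit := Summable.sum_add_tsum_nat_add (f := fun k => f 1 k * (Nat.factorial n)) (n-1) hsummable
  -- tail equals T n
  have htail : ∑' k, f 1 (k + (n-1)) * (Nat.factorial n) = T n := by
    unfold T
    apply tsum_congr
    intro k
    unfold f
    have e : 1+1+(k+(n-1)) = n+1+k := by omega
    rw [e]
    have : Nat.factorial 1 = 1 := rfl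
    rw [this]
    push_cast
    ring
  -- finite part is a natural number
  have hfin : ∃ c : ℕ, ∑ k ∈ Finset.range (n-1), f 1 k * (Nat.factorial n) = (c : ℝ) := by
    refine ⟨∑ k ∈ Finset.range (n-1), a (2+k) * (Nat.factorial n / Nat.factorial (2+k)), ?_⟩
    push_cast
    apply Finset.sum_congr rfl
    intro k hk
    rw [hf k]
    have hk' : 2+k ≤ n := by
      have := Finset.mem_range.mp hk
      omega
    have hdvd : Nat.factorial (2+k) ∣ Nat.factorial n := Nat.factorial_dvd_factorial hk'
    rw [Nat.cast_div hdvd (by exact_mod_cast (Nat.factorial_pos (2+k)).ne')]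
    ring
  obtain ⟨c, hc⟩ := hfin
  have : T 1 * (Nat.factorial n) = (c : ℝ) + T n := by
    rw [hsum, ← hsplit, hc, htail]
  rw [this]
  rw [show ((c:ℝ) + T n) = ((c:ℤ):ℝ) + T n by push_cast; ring]
  rw [Int.fract_intCast_add]
  exact Int.fract_eq_self.mpr ⟨T_nonneg n, T_lt_one n⟩

def clamp (x : ℝ) : ℝ := max (min x 1) 0

lemma clamp_lip (x y : ℝ) : |clamp x - clamp y| ≤ |x - y| := by
  unfold clamp
  calc |max (min x 1) 0 - max (min y 1) 0| ≤ |min x 1 - min y 1| := abs_max_sub_max_le_abs _ _ _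
    _ ≤ max |x - y| |(1:ℝ) - 1| := abs_min_sub_min_le_max _ _ _ _
    _ ≤ |x - y| := by simp

lemma clamp_of_Ico {x : ℝ} (h1 : 0 ≤ x) (h2 : x < 1) : clamp x = x := by
  unfold clamp
  rw [min_eq_left h2.le, max_eq_left h1]

lemma count_grid0 (L : ℕ) (hL : 1 ≤ L) (γ : ℝ) :
    |(((Finset.range L).filter (fun i : ℕ => (i:ℝ)/(L:ℝ) ≤ γ)).card : ℝ) - (L:ℝ) * clamp γ| ≤ 1 := by
  have hLpos : (0:ℝ) < L := by exact_mod_cast hL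
  rcases lt_or_ge γ 0 with hg | hg
  · have he : (Finset.range L).filter (fun i : ℕ => (i:ℝ)/(L:ℝ) ≤ γ) = ∅ := by
      apply Finset.filter_false_of_mem
      intro i _
      have : (0:ℝ) ≤ (i:ℝ)/(L:ℝ) := by positivity
      linarith
    have hc : clamp γ = 0 := by
      unfold clamp
      rw [max_eq_right]
      exact min_le_of_left_le hg.le
    rw [he, hc]
    simp
  rcases le_or_gt 1 γ with hg1 | hg1
  · have he : (Finset.range L).filter (fun i : ℕ => (i:ℝ)/(L:ℝ) ≤ γ) = Finset.range L := by
      apply Finset.filter_true_of_mem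
      intro i hi
      have hi' : i < L := Finset.mem_range.mp hi
      have : (i:ℝ) < L := by exact_mod_cast hi'
      calc (i:ℝ)/(L:ℝ) ≤ 1 := by rw [div_le_one hLpos]; linarith
        _ ≤ γ := hg1
    have hc : clamp γ = 1 := by
      unfold clamp
      rw [min_eq_right hg1, max_eq_left (by norm_num)]
    rw [he, hc]
    simp
  · have hc : clamp γ = γ := clamp_of_Ico hg hg1
    have hfl : (⌊(L:ℝ)*γ⌋₊ : ℕ) < L := by
      have h1 : (L:ℝ)*γ < L := by nlinarith
      exact (Nat.floor_lt (by positivity : (0:ℝ) ≤ (L:ℝ)*γ)).mpr (by exact_mod_cast h1)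
    have he : (Finset.range L).filter (fun i : ℕ => (i:ℝ)/(L:ℝ) ≤ γ) = Finset.range (⌊(L:ℝ)*γ⌋₊ + 1) := by
      ext i
      simp only [Finset.mem_filter, Finset.mem_range, Nat.lt_succ_iff]
      constructor
      · rintro ⟨hi, hile⟩
        apply Nat.le_floor
        rw [div_le_iff₀ hLpos] at hile
        linarith [hile]
      · intro hile
        have h2 : (i:ℝ) ≤ (L:ℝ)*γ := by
          calc (i:ℝ) ≤ (⌊(L:ℝ)*γ⌋₊ : ℝ) := by exact_mod_cast hile
            _ ≤ (L:ℝ)*γ := Nat.floor_le (by positivity)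
        refine ⟨by omega, ?_⟩
        rw [div_le_iff₀ hLpos]
        linarith
    rw [he, hc, Finset.card_range]
    have hfle : (⌊(L:ℝ)*γ⌋₊ : ℝ) ≤ (L:ℝ)*γ := Nat.floor_le (by positivity)
    have hflt : (L:ℝ)*γ < (⌊(L:ℝ)*γ⌋₊ : ℝ) + 1 := Nat.lt_floor_add_one _
    rw [abs_le]
    constructor <;> push_cast <;> linarith

lemma v_grid_floor (j m : ℕ) (hm : m < 2^j) :
    ⌊((2^j:ℕ):ℝ) * v m⌋₊ < 2^j ∧ v m = (⌊((2^j:ℕ):ℝ) * v m⌋₊ : ℝ) / ((2^j:ℕ):ℝ) := by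
  obtain ⟨i, hi, hvi⟩ := v_grid j m hm
  have hcast : ((2^j:ℕ):ℝ) = (2:ℝ)^j := by push_cast; ring
  have hfe : ⌊((2^j:ℕ):ℝ) * v m⌋₊ = i := by
    rw [hcast, hvi]
    have he : (2:ℝ)^j * ((i:ℝ)/(2:ℝ)^j) = (i:ℝ) := by field_simp
    rw [he, Nat.floor_natCast]
  refine ⟨hfe ▸ hi, ?_⟩
  rw [hfe, hcast]
  exact hvi

lemma count_v_bound : ∀ N : ℕ, ∀ γ : ℝ,
    |(((Finset.range N).filter (fun n : ℕ => v n ≤ γ)).card : ℝ) - (N:ℝ) * clamp γ|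
      ≤ 2 * ((Nat.log 2 N : ℝ) + 1) := by
  intro N
  induction N using Nat.strong_induction_on with
  | _ N ih =>
    intro γ
    rcases Nat.eq_zero_or_pos N with h0 | h0
    · subst h0; simp
    set J := Nat.log 2 N with hJ
    have hJ1 : 2^J ≤ N := Nat.pow_log_le_self 2 h0.ne'
    have hJ2 : N < 2^(J+1) := Nat.lt_pow_succ_log_self (by norm_num) N
    have hpow : (2:ℕ)^(J+1) = 2 * 2^J := by rw [pow_succ]; ring
    set N' := N - 2^J with hN'
    have hN'lt : N' < 2^J := by omega
    have hNeq : N = 2^J + N' := by omega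
    -- split range
    have hsplit : Finset.range N = Finset.range (2^J) ∪ Finset.Ico (2^J) N := by
      rw [Finset.range_eq_Ico, ← Finset.Ico_union_Ico_eq_Ico (Nat.zero_le _) hJ1, ← Finset.range_eq_Ico]
    have hdisj : Disjoint (Finset.range (2^J)) (Finset.Ico (2^J) N) := by
      rw [Finset.disjoint_left]
      intro n hn hn'
      rw [Finset.mem_range] at hn
      rw [Finset.mem_Ico] at hn'
      omega
    have hcard : ((Finset.range N).filter (fun n : ℕ => v n ≤ γ)).card
        = ((Finset.range (2^J)).filter (fun n : ℕ => v n ≤ γ)).card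
          + ((Finset.Ico (2^J) N).filter (fun n : ℕ => v n ≤ γ)).card := by
      rw [hsplit, Finset.filter_union, Finset.card_union_of_disjoint (Finset.disjoint_filter_filter hdisj)]
    -- C1 bijection to grid count
    have hC1 : ((Finset.range (2^J)).filter (fun n : ℕ => v n ≤ γ)).card
        = ((Finset.range (2^J)).filter (fun i : ℕ => (i:ℝ)/((2^J:ℕ):ℝ) ≤ γ)).card := by
      apply Finset.card_bij (fun m _ => ⌊((2^J:ℕ):ℝ) * v m⌋₊)
      · intro m hm
        rw [Finset.mem_filter, Finset.mem_range] at hm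
        obtain ⟨hflt, hfeq⟩ := v_grid_floor J m hm.1
        rw [Finset.mem_filter, Finset.mem_range]
        exact ⟨hflt, by rw [← hfeq]; exact hm.2⟩
      · intro m1 hm1 m2 hm2 heq
        rw [Finset.mem_filter, Finset.mem_range] at hm1 hm2
        obtain ⟨_, hf1⟩ := v_grid_floor J m1 hm1.1
        obtain ⟨_, hf2⟩ := v_grid_floor J m2 hm2.1
        apply v_inj
        rw [hf1, hf2, heq]
      · intro i hi
        rw [Finset.mem_filter, Finset.mem_range] at hi
        have himg : (Finset.range (2^J)).image (fun m => ⌊((2^J:ℕ):ℝ) * v m⌋₊) = Finset.range (2^J) := by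
          apply Finset.eq_of_subset_of_card_le
          · intro x hx
            rw [Finset.mem_image] at hx
            obtain ⟨m, hm, hmx⟩ := hx
            rw [Finset.mem_range] at hm ⊢
            rw [← hmx]
            exact (v_grid_floor J m hm).1
          · rw [Finset.card_image_of_injOn, Finset.card_range]
            intro m1 hm1 m2 hm2 heq
            rw [Finset.coe_range, Set.mem_Iio] at hm1 hm2
            have heq' : ⌊((2^J:ℕ):ℝ) * v m1⌋₊ = ⌊((2^J:ℕ):ℝ) * v m2⌋₊ := heq
            apply v_inj
            rw [(v_grid_floor J m1 hm1).2, (v_grid_floor J m2 hm2).2, heq']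
        have : i ∈ (Finset.range (2^J)).image (fun m => ⌊((2^J:ℕ):ℝ) * v m⌋₊) := by
          rw [himg, Finset.mem_range]; exact hi.1
        rw [Finset.mem_image] at this
        obtain ⟨m, hm, hmx⟩ := this
        rw [Finset.mem_range] at hm
        refine ⟨m, ?_, hmx⟩
        rw [Finset.mem_filter, Finset.mem_range]
        refine ⟨hm, ?_⟩
        rw [(v_grid_floor J m hm).2, hmx]
        exact hi.2
    -- C2 bijection to shifted count
    have hC2 : ((Finset.Ico (2^J) N).filter (fun n : ℕ => v n ≤ γ)).card
        = ((Finset.range N').filter (fun m : ℕ => v m ≤ γ - 1/((2^(J+1):ℕ):ℝ))).card := by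
      symm
      apply Finset.card_bij (fun m _ => 2^J + m)
      · intro m hm
        rw [Finset.mem_filter, Finset.mem_range] at hm
        rw [Finset.mem_filter, Finset.mem_Ico]
        refine ⟨⟨by omega, by omega⟩, ?_⟩
        rw [v_add J (2^J) m dvd_rfl (by omega), v_pow]
        have : (1:ℝ)/((2^(J+1):ℕ):ℝ) = 1/(2:ℝ)^(J+1) := by push_cast; ring
        rw [this] at hm
        linarith [hm.2]
      · intro m1 _ m2 _ heq; omega
      · intro n hn
        rw [Finset.mem_filter, Finset.mem_Ico] at hn
        refine ⟨n - 2^J, ?_, by omega⟩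
        rw [Finset.mem_filter, Finset.mem_range]
        refine ⟨by omega, ?_⟩
        have he : n = 2^J + (n - 2^J) := by omega
        have h2 := hn.2
        rw [he, v_add J (2^J) (n - 2^J) dvd_rfl (by omega), v_pow] at h2
        have : (1:ℝ)/((2^(J+1):ℕ):ℝ) = 1/(2:ℝ)^(J+1) := by push_cast; ring
        rw [this]
        linarith
    -- apply grid bound and IH
    have hgrid := count_grid0 (2^J) (Nat.one_le_two_pow) γ
    set γ' := γ - 1/((2^(J+1):ℕ):ℝ) with hγ'
    have hih : |(((Finset.range N').filter (fun m : ℕ => v m ≤ γ')).card : ℝ) - (N':ℝ) * clamp γ'|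
        ≤ 2 * ((J:ℝ) - 1 + 1) := by
      rcases Nat.eq_zero_or_pos N' with h' | h'
      · rw [h']
        simp only [Finset.range_zero, Finset.filter_empty, Finset.card_empty, Nat.cast_zero,
          zero_mul, sub_zero, abs_zero, sub_self]
        have he : (J:ℝ) - 1 + 1 = (J:ℝ) := by ring
        rw [he]
        positivity
      · have hNlt : N' < N := by omega
        have hlog : Nat.log 2 N' ≤ J - 1 := by
          have := Nat.log_lt_of_lt_pow h'.ne' (show N' < 2^J from hN'lt)
          omega
        have hJ0 : 1 ≤ J := by
          rcases Nat.eq_zero_or_pos J with hj0 | hj0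
          · exfalso; rw [hj0] at hN'lt; omega
          · exact hj0
        calc _ ≤ 2 * ((Nat.log 2 N' : ℝ) + 1) := ih N' hNlt γ'
          _ ≤ 2 * ((J:ℝ) - 1 + 1) := by
              have : (Nat.log 2 N' : ℝ) ≤ (J:ℝ) - 1 := by
                have : ((Nat.log 2 N' : ℕ):ℝ) ≤ ((J - 1 : ℕ):ℝ) := by exact_mod_cast hlog
                have hc : ((J - 1 : ℕ):ℝ) = (J:ℝ) - 1 := by
                  rw [Nat.cast_sub hJ0]; norm_num
                linarith [hc ▸ this]
              linarith
    -- clamp shift bound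
    have hclamp : (N':ℝ) * |clamp γ' - clamp γ| ≤ 1/2 := by
      have hd : γ' - γ = -(1/((2^(J+1):ℕ):ℝ)) := by rw [hγ']; ring
      have h1 : |clamp γ' - clamp γ| ≤ 1/((2^(J+1):ℕ):ℝ) := by
        calc |clamp γ' - clamp γ| ≤ |γ' - γ| := clamp_lip _ _
          _ = 1/((2^(J+1):ℕ):ℝ) := by
              rw [hd, abs_neg, abs_of_nonneg (by positivity)]
      have hc2 : ((2^(J+1):ℕ):ℝ) = 2 * ((2^J:ℕ):ℝ) := by push_cast; ring
      have hN'le : (N':ℝ) ≤ ((2^J:ℕ):ℝ) := by exact_mod_cast hN'lt.le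
      have hp : (0:ℝ) < ((2^J:ℕ):ℝ) := by positivity
      have hN0 : (0:ℝ) ≤ (N':ℝ) := by positivity
      calc (N':ℝ) * |clamp γ' - clamp γ| ≤ ((2^J:ℕ):ℝ) * (1/((2^(J+1):ℕ):ℝ)) := by
            apply mul_le_mul hN'le h1 (abs_nonneg _) hp.le
        _ = 1/2 := by rw [hc2]; field_simp
    -- assemble
    have hNcast : (N:ℝ) = ((2^J:ℕ):ℝ) + (N':ℝ) := by exact_mod_cast hNeq
    set C1 : ℝ := (((Finset.range (2^J)).filter (fun i : ℕ => (i:ℝ)/((2^J:ℕ):ℝ) ≤ γ)).card : ℝ)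
    set C2 : ℝ := (((Finset.range N').filter (fun m : ℕ => v m ≤ γ')).card : ℝ)
    have hkey : (((Finset.range N).filter (fun n : ℕ => v n ≤ γ)).card : ℝ) - (N:ℝ) * clamp γ
        = (C1 - ((2^J:ℕ):ℝ) * clamp γ) + (C2 - (N':ℝ) * clamp γ') + (N':ℝ) * (clamp γ' - clamp γ) := by
      rw [hcard, hC1, hC2, Nat.cast_add, hNcast]
      ring
    rw [hkey]
    have habs3 : |(C1 - ((2^J:ℕ):ℝ) * clamp γ) + (C2 - (N':ℝ) * clamp γ') + (N':ℝ) * (clamp γ' - clamp γ)|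
        ≤ |C1 - ((2^J:ℕ):ℝ) * clamp γ| + |C2 - (N':ℝ) * clamp γ'| + |(N':ℝ) * (clamp γ' - clamp γ)| :=
      (abs_add_le _ _).trans (by gcongr; exact abs_add_le _ _)
    have h3 : |(N':ℝ) * (clamp γ' - clamp γ)| ≤ 1/2 := by
      rw [abs_mul, abs_of_nonneg (by positivity : (0:ℝ) ≤ (N':ℝ))]
      exact hclamp
    calc _ ≤ |C1 - ((2^J:ℕ):ℝ) * clamp γ| + |C2 - (N':ℝ) * clamp γ'| + |(N':ℝ) * (clamp γ' - clamp γ)| := habs3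
      _ ≤ 1 + 2 * ((J:ℝ) - 1 + 1) + 1/2 := add_le_add (add_le_add hgrid hih) h3
      _ ≤ 2 * ((J:ℝ) + 1) := by ring_nf; linarith

lemma level_count (t : ℕ) (γ : ℝ) :
    ((Finset.Ico (2^t) (2^(t+1))).filter (fun n : ℕ => |v n - γ| < 1/(2:ℝ)^t)).card ≤ 2 := by
  set A : ℝ := ((2:ℝ)^(t+1) * γ - 3)/2 with hA
  have hmem : ∀ n ∈ (Finset.Ico (2^t) (2^(t+1))).filter (fun n : ℕ => |v n - γ| < 1/(2:ℝ)^t),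
      ∃ m : ℕ, m % 2 = 1 ∧ v n = (m:ℝ)/(2:ℝ)^(t+1) ∧ ⌊(2:ℝ)^(t+1) * v n⌋₊ = m ∧
        A < ((m-1)/2 : ℕ) ∧ (((m-1)/2 : ℕ) : ℝ) < A + 2 := by
    intro n hn
    rw [Finset.mem_filter, Finset.mem_Ico] at hn
    obtain ⟨⟨h1, h2⟩, h3⟩ := hn
    obtain ⟨m, hmo, hmv⟩ := v_odd t n h1 h2
    have hfl : ⌊(2:ℝ)^(t+1) * v n⌋₊ = m := by
      rw [hmv]
      have : (2:ℝ)^(t+1) * ((m:ℝ)/(2:ℝ)^(t+1)) = (m:ℝ) := by field_simp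
      rw [this, Nat.floor_natCast]
    have hm2 : |(m:ℝ) - (2:ℝ)^(t+1)*γ| < 2 := by
      rw [hmv, abs_lt] at h3
      have hp : (0:ℝ) < (2:ℝ)^(t+1) := by positivity
      have hps : (2:ℝ)^(t+1) = 2 * (2:ℝ)^t := by rw [pow_succ]; ring
      have e1 : (-(1/(2:ℝ)^t)) * (2:ℝ)^(t+1) = -2 := by
        rw [hps]; field_simp
      have e2 : ((m:ℝ)/(2:ℝ)^(t+1) - γ) * (2:ℝ)^(t+1) = (m:ℝ) - (2:ℝ)^(t+1)*γ := by
        field_simp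
      have e3 : (1/(2:ℝ)^t) * (2:ℝ)^(t+1) = 2 := by
        rw [hps]; field_simp
      have hl := mul_lt_mul_of_pos_right h3.1 hp
      have hr := mul_lt_mul_of_pos_right h3.2 hp
      rw [e1, e2] at hl
      rw [e2, e3] at hr
      rw [abs_lt]
      exact ⟨hl, hr⟩
    have hq : (m:ℝ) = 2 * (((m-1)/2 : ℕ):ℝ) + 1 := by
      have h' : m = 2 * ((m-1)/2) + 1 := by omega
      exact_mod_cast h' 
    rw [abs_lt] at hm2
    refine ⟨m, hmo, hmv, hfl, by rw [hA]; nlinarith [hq], by rw [hA]; nlinarith [hq]⟩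
  calc ((Finset.Ico (2^t) (2^(t+1))).filter (fun n : ℕ => |v n - γ| < 1/(2:ℝ)^t)).card
      ≤ ({⌊A⌋ + 1, ⌊A⌋ + 2} : Finset ℤ).card := by
        apply Finset.card_le_card_of_injOn (fun n => ((⌊(2:ℝ)^(t+1) * v n⌋₊ : ℤ) - 1)/2)
        · intro n hn
          obtain ⟨m, hmo, hmv, hfl, hq1, hq2⟩ := hmem n hn
          have he : ((⌊(2:ℝ)^(t+1) * v n⌋₊ : ℤ) - 1)/2 = (((m-1)/2 : ℕ) : ℤ) := by
            rw [hfl]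
            omega
          simp only [Finset.mem_coe]
          rw [he]
          have hlb : (⌊A⌋ : ℤ) < (((m-1)/2 : ℕ) : ℤ) := by
            have := Int.floor_lt.mpr (by exact_mod_cast hq1 : A < ((((m-1)/2 : ℕ) : ℤ) : ℝ))
            exact this
          have hub : ((((m-1)/2 : ℕ) : ℤ) : ℝ) < A + 2 := by exact_mod_cast hq2
          have hub' : (((m-1)/2 : ℕ) : ℤ) ≤ ⌊A⌋ + 2 := by
            have h1 : ((((m-1)/2 : ℕ) : ℤ) : ℝ) < (⌊A⌋ : ℝ) + 1 + 2 := by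
              have := Int.lt_floor_add_one A
              linarith
            have : (((m-1)/2 : ℕ) : ℤ) < ⌊A⌋ + 1 + 2 := by exact_mod_cast h1
            omega
          simp only [Finset.mem_insert, Finset.mem_singleton]
          omega
        · intro n1 hn1 n2 hn2 heq
          obtain ⟨m1, hmo1, hmv1, hfl1, _, _⟩ := hmem n1 hn1
          obtain ⟨m2, hmo2, hmv2, hfl2, _, _⟩ := hmem n2 hn2
          simp only at heq
          rw [hfl1, hfl2] at heq
          have : m1 = m2 := by omega
          apply v_inj
          rw [hmv1, hmv2, this]
    _ ≤ 2 := by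
        apply le_trans (Finset.card_insert_le _ _)
        simp

lemma card_filter_le (s : Finset ℕ) (p q : ℕ → Prop) :
    (s.filter p).card ≤ (s.filter q).card + (s.filter (fun n => ¬(p n ↔ q n))).card := by
  have hsub : s.filter p ⊆ s.filter q ∪ s.filter (fun n => ¬(p n ↔ q n)) := by
    intro n hn
    rw [Finset.mem_filter] at hn
    rw [Finset.mem_union, Finset.mem_filter, Finset.mem_filter]
    by_cases h : q n
    · exact Or.inl ⟨hn.1, h⟩
    · exact Or.inr ⟨hn.1, fun hiff => h (hiff.mp hn.2)⟩
  exact le_trans (Finset.card_le_card hsub) (Finset.card_union_le _ _)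

lemma abs_filter_diff (s : Finset ℕ) (p q : ℕ → Prop) :
    |((s.filter p).card : ℝ) - ((s.filter q).card : ℝ)|
      ≤ ((s.filter (fun n => ¬(p n ↔ q n))).card : ℝ) := by
  have he : s.filter (fun n => ¬(q n ↔ p n)) = s.filter (fun n => ¬(p n ↔ q n)) := by
    apply Finset.filter_congr
    intro n _
    constructor
    · intro h hx; exact h hx.symm
    · intro h hx; exact h hx.symm
  have h1 := card_filter_le s p q
  have h2 := card_filter_le s q p
  rw [he] at h2
  have h1' : ((s.filter p).card : ℝ) ≤ (s.filter q).card + (s.filter (fun n => ¬(p n ↔ q n))).card := by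
    exact_mod_cast h1
  have h2' : ((s.filter q).card : ℝ) ≤ (s.filter p).card + (s.filter (fun n => ¬(p n ↔ q n))).card := by
    exact_mod_cast h2
  rw [abs_le]
  constructor <;> linarith

lemma diff_count (N : ℕ) (γ : ℝ) :
    (((Finset.Icc 1 N).filter (fun n : ℕ => ¬(T n ≤ γ ↔ v n ≤ γ))).card : ℝ)
      ≤ 2 * ((Nat.log 2 N : ℝ) + 1) := by
  set J := Nat.log 2 N with hJ
  have hsub : (Finset.Icc 1 N).filter (fun n : ℕ => ¬(T n ≤ γ ↔ v n ≤ γ))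
      ⊆ (Finset.range (J+1)).biUnion
          (fun t => (Finset.Ico (2^t) (2^(t+1))).filter (fun n : ℕ => |v n - γ| < 1/(2:ℝ)^t)) := by
    intro n hn
    rw [Finset.mem_filter, Finset.mem_Icc] at hn
    obtain ⟨⟨h1, h2⟩, h3⟩ := hn
    set t := Nat.log 2 n with ht
    have ht1 : 2^t ≤ n := Nat.pow_log_le_self 2 (by omega)
    have ht2 : n < 2^(t+1) := Nat.lt_pow_succ_log_self (by norm_num) n
    have htJ : t ≤ J := Nat.log_mono_right h2
    rw [Finset.mem_biUnion]
    refine ⟨t, Finset.mem_range.mpr (by omega), ?_⟩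
    rw [Finset.mem_filter, Finset.mem_Ico]
    refine ⟨⟨ht1, ht2⟩, ?_⟩
    -- indicator mismatch implies closeness
    have hclose := T_close n
    have hvg : |v n - γ| ≤ |T n - v n| := by
      by_cases hT : T n ≤ γ
      · have hv : ¬ v n ≤ γ := fun hv => h3 ⟨fun _ => hv, fun _ => hT⟩
        push_neg at hv
        rw [abs_of_pos (by linarith)]
        calc v n - γ ≤ v n - T n := by linarith
          _ ≤ |T n - v n| := by rw [abs_sub_comm]; exact le_abs_self _
      · push_neg at hT
        have hv : v n ≤ γ := by
          by_contra hv
          push_neg at hv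
          exact h3 ⟨fun h => absurd h (by linarith), fun h => absurd h (by linarith)⟩
        rw [abs_of_nonpos (by linarith)]
        calc -(v n - γ) = γ - v n := by ring
          _ ≤ T n - v n := by linarith
          _ ≤ |T n - v n| := le_abs_self _
    have hn1 : ((2:ℝ)^t) < (n:ℝ) + 1 := by
      have : ((2^t : ℕ):ℝ) ≤ (n:ℝ) := by exact_mod_cast ht1
      push_cast at this
      linarith
    calc |v n - γ| ≤ |T n - v n| := hvg
      _ < 1/((n:ℝ)+1) := hclose
      _ ≤ 1/(2:ℝ)^t := by
          apply div_le_div_of_nonneg_left one_pos.le (by positivity) hn1.le |>.trans_eq rfl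
  calc (((Finset.Icc 1 N).filter (fun n : ℕ => ¬(T n ≤ γ ↔ v n ≤ γ))).card : ℝ)
      ≤ (((Finset.range (J+1)).biUnion
          (fun t => (Finset.Ico (2^t) (2^(t+1))).filter (fun n : ℕ => |v n - γ| < 1/(2:ℝ)^t))).card : ℝ) := by
        exact_mod_cast Finset.card_le_card hsub
    _ ≤ ((Finset.range (J+1)).sum
          (fun t => ((Finset.Ico (2^t) (2^(t+1))).filter (fun n : ℕ => |v n - γ| < 1/(2:ℝ)^t)).card) : ℕ) := by
        exact_mod_cast Finset.card_biUnion_le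
    _ ≤ (((J+1) * 2 : ℕ) : ℝ) := by
        have := Finset.sum_le_card_nsmul (Finset.range (J+1))
          (fun t => ((Finset.Ico (2^t) (2^(t+1))).filter (fun n : ℕ => |v n - γ| < 1/(2:ℝ)^t)).card) 2
          (fun t _ => level_count t γ)
        have h2 : (Finset.range (J+1)).card = J+1 := Finset.card_range _
        rw [h2] at this
        exact_mod_cast this
    _ = 2 * ((J:ℝ) + 1) := by push_cast; ring

end S12

end

theorem stmt12 :
    ∃ (α : ℝ) (M : ℝ), 0 < M ∧ ∀ N : ℕ, 2 ≤ N →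
      ∀ γ ∈ Set.Ico (0 : ℝ) 1,
        |(N : ℝ) * γ -
          ((Finset.Icc 1 N).filter
            (fun k => Int.fract (α * Nat.factorial k) ≤ γ)).card| ≤
          M * Real.log N := by
  refine ⟨S12.T 1, 100, by norm_num, ?_⟩
  intro N hN γ hγ
  obtain ⟨hγ0, hγ1⟩ := hγ
  have hfe : (Finset.Icc 1 N).filter (fun k => Int.fract (S12.T 1 * Nat.factorial k) ≤ γ)
      = (Finset.Icc 1 N).filter (fun k => S12.T k ≤ γ) := by
    apply Finset.filter_congr
    intro k hk
    rw [Finset.mem_Icc] at hk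
    rw [S12.fract_T k hk.1]
  rw [hfe]
  set J := Nat.log 2 N with hJdef
  set Sx : ℝ := (((Finset.Icc 1 N).filter (fun k => S12.T k ≤ γ)).card : ℝ) with hSx
  set Sv : ℝ := (((Finset.Icc 1 N).filter (fun k => S12.v k ≤ γ)).card : ℝ) with hSv
  -- perturbation bound
  have h1 : |Sx - Sv| ≤ 2 * ((J:ℝ) + 1) := by
    calc |Sx - Sv| ≤ (((Finset.Icc 1 N).filter
          (fun n : ℕ => ¬(S12.T n ≤ γ ↔ S12.v n ≤ γ))).card : ℝ) :=
        S12.abs_filter_diff (Finset.Icc 1 N) (fun n => S12.T n ≤ γ) (fun n => S12.v n ≤ γ)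
      _ ≤ 2 * ((J:ℝ) + 1) := S12.diff_count N γ
  -- vdC bound
  have hins : Finset.range (N+1) = insert 0 (Finset.Icc 1 N) := by
    ext n
    simp only [Finset.mem_range, Finset.mem_insert, Finset.mem_Icc]
    omega
  have h0mem : (0:ℕ) ∉ Finset.Icc 1 N := by simp
  have hv0 : S12.v 0 ≤ γ := by rw [S12.v_zero]; exact hγ0
  have hcount : (((Finset.range (N+1)).filter (fun n : ℕ => S12.v n ≤ γ)).card : ℝ) = Sv + 1 := by
    rw [hins, Finset.filter_insert, if_pos hv0,
      Finset.card_insert_of_notMem (fun h => h0mem (Finset.mem_filter.mp h).1)]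
    push_cast
    ring
  have hclamp : S12.clamp γ = γ := S12.clamp_of_Ico hγ0 hγ1
  have hcv := S12.count_v_bound (N+1) γ
  rw [hclamp, hcount] at hcv
  have hlog1 : Nat.log 2 (N+1) ≤ J + 1 := by
    have hN2 : N < 2^(J+1) := Nat.lt_pow_succ_log_self (by norm_num) N
    have : N + 1 < 2^(J+2) := by
      have h22 : (2:ℕ)^(J+1) < 2^(J+2) := Nat.pow_lt_pow_right (by norm_num) (by omega)
      omega
    have := Nat.log_lt_of_lt_pow (by omega : N + 1 ≠ 0) this
    omega
  have h2 : |Sv - (N:ℝ) * γ| ≤ 2 * ((J:ℝ) + 2) + 1 := by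
    have he : Sv - (N:ℝ) * γ = ((Sv + 1) - ((N:ℕ)+1 : ℝ) * γ) + (γ - 1) := by ring
    have hcv' : |(Sv + 1) - (((N+1):ℕ):ℝ) * γ| ≤ 2 * ((Nat.log 2 (N+1) : ℝ) + 1) := hcv
    have hcast : (((N+1):ℕ):ℝ) = ((N:ℕ):ℝ) + 1 := by push_cast; ring
    rw [hcast] at hcv'
    have hlog1' : (Nat.log 2 (N+1) : ℝ) ≤ (J:ℝ) + 1 := by exact_mod_cast hlog1
    have hγabs : |γ - 1| ≤ 1 := by rw [abs_le]; constructor <;> linarith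
    calc |Sv - (N:ℝ) * γ| = |((Sv + 1) - (((N:ℕ):ℝ)+1) * γ) + (γ - 1)| := by rw [he]
      _ ≤ |(Sv + 1) - (((N:ℕ):ℝ)+1) * γ| + |γ - 1| := abs_add_le _ _
      _ ≤ 2 * ((Nat.log 2 (N+1) : ℝ) + 1) + 1 := by linarith
      _ ≤ 2 * ((J:ℝ) + 2) + 1 := by linarith
  -- numeric conclusion
  have htot : |(N:ℝ) * γ - Sx| ≤ 4 * (J:ℝ) + 9 := by
    calc |(N:ℝ) * γ - Sx| = |(Sx - Sv) + (Sv - (N:ℝ)*γ)| := by rw [abs_sub_comm]; ring_nf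
      _ ≤ |Sx - Sv| + |Sv - (N:ℝ)*γ| := abs_add_le _ _
      _ ≤ 2 * ((J:ℝ) + 1) + (2 * ((J:ℝ) + 2) + 1) := by linarith
      _ ≤ 4 * (J:ℝ) + 9 := by linarith
  have hl2 : (0.6931471803 : ℝ) < Real.log 2 := Real.log_two_gt_d9
  have hlogN : Real.log 2 ≤ Real.log N := by
    apply Real.log_le_log (by norm_num)
    exact_mod_cast hN
  have hJ1 : (2:ℕ)^J ≤ N := Nat.pow_log_le_self 2 (by omega)
  have hJlog : (J:ℝ) * Real.log 2 ≤ Real.log N := by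
    have hpow : ((2:ℝ))^J ≤ (N:ℝ) := by exact_mod_cast hJ1
    have h := Real.log_le_log (by positivity : (0:ℝ) < 2^J) hpow
    rw [Real.log_pow] at h
    exact_mod_cast h
  have hJ0 : (0:ℝ) ≤ (J:ℝ) := by positivity
  calc |(N:ℝ) * γ - Sx| ≤ 4 * (J:ℝ) + 9 := htot
    _ ≤ 100 * Real.log N := by nlinarith
end
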